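/- arXiv:1507.04203 — 11 statements merged into one kernel-verified Lean document; each statement's English description precedes it below -/
import Mathlib

section
/- Let K be a field of characteristic zero and let F be a formal power series in two variables X and Y over K. Then the differential equation Y' = F(X,Y) with initial condition Y(0) = 0 admits a unique formal power series solution: there exists exactly one formal power series S in K[[X]] with zero constant term such that S' = F(X,S), where S' is the formal derivative of S and F(X,S) denotes the substitution of S for the second variable of F (well defined because S has zero constant term). -/
/-- Substitution `F(X, g)` of the power series `X` for the first variable and a
one-variable power series `g` (intended to have zero constant term) for the second
variable of a two-variable formal power series `F`.  The coefficient of `X^n` is the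
(finite, when `g` has zero constant term) sum
`∑_d coeff_d F · coeff_n (X^{d₀} · g^{d₁})`. -/
noncomputable def PowerSeries.substXY {K : Type*} [Field K]
    (F : MvPowerSeries (Fin 2) K) (g : PowerSeries K) : PowerSeries K :=
  PowerSeries.mk fun n =>
    ∑ i ∈ Finset.range (n + 1), ∑ j ∈ Finset.range (n + 1),
      MvPowerSeries.coeff (Finsupp.single 0 i + Finsupp.single 1 j) F *
        PowerSeries.coeff n (PowerSeries.X ^ i * g ^ j)

namespace ODEProofAux

open PowerSeries

variable {K : Type*} [Field K]

lemma coeff_pow_congr (g h : PowerSeries K) {n : ℕ}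
    (hgh : ∀ k ≤ n, coeff k g = coeff k h) (j : ℕ) :
    ∀ m ≤ n, coeff m (g ^ j) = coeff m (h ^ j) := by
  induction j with
  | zero => intro m _; simp
  | succ j ih =>
    intro m hm
    rw [pow_succ, pow_succ, coeff_mul, coeff_mul]
    refine Finset.sum_congr rfl fun p hp => ?_
    rw [Finset.HasAntidiagonal.mem_antidiagonal] at hp
    rw [ih p.1 (by omega), hgh p.2 (by omega)]

lemma substXY_coeff_congr (F : MvPowerSeries (Fin 2) K) (g h : PowerSeries K) (n : ℕ)
    (hgh : ∀ k ≤ n, coeff k g = coeff k h) :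
    coeff n (substXY F g) = coeff n (substXY F h) := by
  simp only [substXY, coeff_mk]
  refine Finset.sum_congr rfl fun i _ => Finset.sum_congr rfl fun j _ => ?_
  congr 1
  rw [coeff_mul, coeff_mul]
  refine Finset.sum_congr rfl fun p hp => ?_
  rw [Finset.HasAntidiagonal.mem_antidiagonal] at hp
  rw [coeff_pow_congr g h hgh j p.2 (by omega)]

noncomputable def solCoeff (F : MvPowerSeries (Fin 2) K) : ℕ → K
  | 0 => 0
  | (n+1) =>
      (coeff n (substXY F (mk fun k => if _ : k ≤ n then solCoeff F k else 0))) / (n+1)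
  decreasing_by omega

noncomputable def sol (F : MvPowerSeries (Fin 2) K) : PowerSeries K := mk (solCoeff F)

lemma coeff_substXY_sol [CharZero K] (F : MvPowerSeries (Fin 2) K) (n : ℕ) :
    coeff n (substXY F (sol F)) = solCoeff F (n + 1) * (n + 1) := by
  have h : coeff n (substXY F (sol F)) =
      coeff n (substXY F (mk fun k => if _ : k ≤ n then solCoeff F k else 0)) := by
    refine substXY_coeff_congr F _ _ n fun k hk => ?_
    simp [sol, coeff_mk, hk]
  have hne : ((n : K) + 1) ≠ 0 := Nat.cast_add_one_ne_zero n
  rw [h, solCoeff, div_mul_cancel₀ _ hne]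

lemma sol_spec [CharZero K] (F : MvPowerSeries (Fin 2) K) :
    constantCoeff (sol F) = 0 ∧ derivative K (sol F) = substXY F (sol F) := by
  constructor
  · rw [← coeff_zero_eq_constantCoeff]
    simp [sol, coeff_mk, solCoeff]
  · ext n
    rw [coeff_derivative, coeff_substXY_sol]
    simp [sol, coeff_mk]

end ODEProofAux

/-- The differential equation `Y' = F(X, Y)` with initial condition `Y(0) = 0`
admits a unique formal power series solution. -/
theorem unique_powerSeries_solution_of_ode {K : Type*} [Field K] [CharZero K]
    (F : MvPowerSeries (Fin 2) K) :
    ∃! S : PowerSeries K, PowerSeries.constantCoeff S = 0 ∧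
      PowerSeries.derivative K S = PowerSeries.substXY F S := by
  open PowerSeries ODEProofAux in
  refine ⟨sol F, sol_spec F, ?_⟩
  rintro T ⟨hT0, hTd⟩
  obtain ⟨hS0, hSd⟩ := sol_spec (K := K) F
  ext k
  induction k using Nat.strong_induction_on with
  | _ k ih =>
    match k with
    | 0 => simp only [coeff_zero_eq_constantCoeff]; rw [hT0, hS0]
    | (n+1) =>
      have h1 : coeff (n+1) T * (n+1) = coeff (n+1) (sol F) * (n+1) := by
        rw [← coeff_derivative, ← coeff_derivative, hTd, hSd]
        exact substXY_coeff_congr F T (sol F) n fun j hj => ih j (by omega)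
      have hne : ((n : ℕ) + 1 : K) ≠ 0 := by exact_mod_cast Nat.succ_ne_zero n
      exact mul_right_cancel₀ hne h1
end

section
/- Let K be a field of characteristic zero and F a formal power series in two variables over K. For Y in K[[X]] with zero constant term, let G(Y) denote the antiderivative with zero constant term of F(X,Y). Then for any two formal power series Y₁ ≠ Y₂ in K[[X]], both with zero constant term, one has val(G(Y₁) − G(Y₂)) > val(Y₁ − Y₂). -/
/-- The antiderivative with zero constant term of a formal power series:
`∑ c_n X^n ↦ ∑ c_n X^{n+1}/(n+1)`. -/
noncomputable def PowerSeries.integral {K : Type*} [Field K] (f : PowerSeries K) :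
    PowerSeries K :=
  PowerSeries.mk fun n => if n = 0 then 0 else PowerSeries.coeff (n - 1) f / (n : K)

lemma coeff_substXY_sub {K : Type*} [Field K]
    (F : MvPowerSeries (Fin 2) K) (Y₁ Y₂ : PowerSeries K) (k : ℕ)
    (hk : (k : ℕ∞) < (Y₁ - Y₂).order) :
    PowerSeries.coeff k (PowerSeries.substXY F Y₁ - PowerSeries.substXY F Y₂) = 0 := by
  rw [map_sub, PowerSeries.substXY, PowerSeries.substXY, PowerSeries.coeff_mk,
    PowerSeries.coeff_mk, ← Finset.sum_sub_distrib]
  refine Finset.sum_eq_zero fun i _ => ?_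
  rw [← Finset.sum_sub_distrib]
  refine Finset.sum_eq_zero fun j _ => ?_
  rw [← mul_sub, ← map_sub, ← mul_sub]
  have key : PowerSeries.coeff k (PowerSeries.X ^ i * (Y₁ ^ j - Y₂ ^ j)) = 0 := by
    by_cases h : Y₁ ^ j - Y₂ ^ j = 0
    · simp [h]
    · obtain ⟨c, hc⟩ := sub_dvd_pow_sub_pow Y₁ Y₂ j
      refine PowerSeries.coeff_of_lt_order _ (lt_of_lt_of_le hk ?_)
      have heq : (PowerSeries.X ^ i * (Y₁ ^ j - Y₂ ^ j)).order =
          ((PowerSeries.X : PowerSeries K) ^ i).order + ((Y₁ - Y₂).order + c.order) := by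
        rw [hc, PowerSeries.order_mul, PowerSeries.order_mul]
      rw [heq]
      exact le_add_of_nonneg_of_le zero_le (le_add_of_le_of_nonneg le_rfl zero_le)
  rw [key, mul_zero]

/-- The operator `G : Y ↦ ∫ F(X, Y)` is a contraction on power series with zero
constant term: `val(G(Y₁) − G(Y₂)) > val(Y₁ − Y₂)` whenever `Y₁ ≠ Y₂`. -/
theorem order_integral_sub_gt {K : Type*} [Field K] [CharZero K]
    (F : MvPowerSeries (Fin 2) K) (Y₁ Y₂ : PowerSeries K)
    (h₁ : PowerSeries.constantCoeff Y₁ = 0)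
    (h₂ : PowerSeries.constantCoeff Y₂ = 0)
    (hne : Y₁ ≠ Y₂) :
    (Y₁ - Y₂).order <
      ((PowerSeries.substXY F Y₁).integral - (PowerSeries.substXY F Y₂).integral).order := by
  have hY : Y₁ - Y₂ ≠ 0 := sub_ne_zero.mpr hne
  have hord : (Y₁ - Y₂).order ≠ ⊤ := fun h => hY (PowerSeries.order_eq_top.mp h)
  set m : ℕ := (Y₁ - Y₂).order.toNat with hm
  have horder : (Y₁ - Y₂).order = (m : ℕ∞) := (ENat.coe_toNat hord).symm
  rw [horder]
  have : ((m + 1 : ℕ) : ℕ∞) ≤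
      ((PowerSeries.substXY F Y₁).integral - (PowerSeries.substXY F Y₂).integral).order := by
    apply PowerSeries.nat_le_order
    intro i hi
    rw [map_sub, PowerSeries.integral, PowerSeries.integral, PowerSeries.coeff_mk,
      PowerSeries.coeff_mk]
    by_cases h0 : i = 0
    · simp [h0]
    · simp only [h0, if_false]
      rw [div_sub_div_same, ← map_sub, coeff_substXY_sub, zero_div]
      rw [horder]
      exact_mod_cast Nat.lt_of_lt_of_le (Nat.sub_lt (Nat.pos_of_ne_zero h0) one_pos)
        (Nat.le_of_lt_succ hi)
  calc ((m : ℕ∞)) < ((m + 1 : ℕ) : ℕ∞) := by exact_mod_cast Nat.lt_succ_self m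
    _ ≤ _ := this
end

section
/- Let K be a field of characteristic zero, let K(z) be the field of rational functions over K equipped with the derivation extending d/dz on K[z], and let F ∈ K(z)[Y] be a polynomial of degree d > 0 in Y. Let (P_k) and (Q_k) be sequences of rational functions in K(z) such that each of them satisfies a nontrivial linear recurrence Σ_{i=0}^{M} c_i(k)·u_{k+i} = 0 for all k ≥ 0, where the c_i are polynomials in k with coefficients in K[z] and the leading coefficient c_M evaluated at each natural number k is a nonzero element of K(z). Assume Q_k ≠ 0 for all k, and define H_k := Q_k^{max(2,d)}·((P_k/Q_k)' − F(P_k/Q_k)), where F(P_k/Q_k) is the evaluation of the polynomial F at P_k/Q_k. Then (H_k) satisfies a nontrivial linear recurrence with coefficients that are polynomials in k with coefficients in K[z]: there exist N ∈ ℕ and polynomials e_0,…,e_N in k with coefficients in K[z], not all zero, such that Σ_{i=0}^{N} e_i(k)·H_{k+i} = 0 for all k ≥ 0. -/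
open Polynomial

set_option linter.unusedSectionVars false
set_option synthInstance.maxHeartbeats 1000000
set_option maxHeartbeats 1000000

namespace PRecAux

variable (K : Type*) [Field K] [CharZero K]

abbrev Seq := ℕ → RatFunc K

variable {K}

def shift (u : Seq K) : Seq K := fun k => u (k + 1)

lemma shift_iterate_apply (u : Seq K) (n k : ℕ) : (shift^[n] u) k = u (k + n) := by
  induction n generalizing u k with
  | zero => rfl
  | succ n ih =>
    rw [Function.iterate_succ_apply, ih]
    simp [shift, Nat.add_assoc, Nat.add_comm 1 n]

variable (K)

noncomputable def B : Subring (Seq K) where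
  carrier := {f | ∃ p q : Polynomial (RatFunc K), (∀ k : ℕ, q.eval (k : RatFunc K) ≠ 0) ∧
      ∀ k : ℕ, f k = p.eval (k : RatFunc K) / q.eval (k : RatFunc K)}
  one_mem' := ⟨1, 1, by simp, by simp⟩
  zero_mem' := ⟨0, 1, by simp, by simp⟩
  mul_mem' := by
    rintro f g ⟨p1, q1, h1, e1⟩ ⟨p2, q2, h2, e2⟩
    refine ⟨p1 * p2, q1 * q2, fun k => by simp [h1 k, h2 k], fun k => ?_⟩
    simp only [Pi.mul_apply, e1 k, e2 k, eval_mul]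
    rw [div_mul_div_comm]
  add_mem' := by
    rintro f g ⟨p1, q1, h1, e1⟩ ⟨p2, q2, h2, e2⟩
    refine ⟨p1 * q2 + p2 * q1, q1 * q2, fun k => by simp [h1 k, h2 k], fun k => ?_⟩
    simp only [Pi.add_apply, e1 k, e2 k, eval_add, eval_mul]
    rw [div_add_div _ _ (h1 k) (h2 k)]
    ring_nf
  neg_mem' := by
    rintro f ⟨p, q, h, e⟩
    exact ⟨-p, q, h, fun k => by simp [e k, neg_div]⟩

noncomputable instance : Algebra (B K) (Seq K) := inferInstance
noncomputable instance : Module (B K) (Seq K) := inferInstance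

variable {K}

noncomputable def frac (p q : Polynomial (RatFunc K))
    (hq : ∀ k : ℕ, q.eval (k : RatFunc K) ≠ 0) : B K :=
  ⟨fun k => p.eval (k : RatFunc K) / q.eval (k : RatFunc K), p, q, hq, fun _ => rfl⟩

lemma frac_apply (p q : Polynomial (RatFunc K)) (hq : ∀ k : ℕ, q.eval (k : RatFunc K) ≠ 0)
    (k : ℕ) : (frac p q hq : Seq K) k = p.eval (k : RatFunc K) / q.eval (k : RatFunc K) := rfl

lemma smul_apply' (b : B K) (u : Seq K) (k : ℕ) : (b • u) k = (b : Seq K) k * u k := rfl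

lemma shift_memB {f : Seq K} (hf : f ∈ B K) : shift f ∈ B K := by
  obtain ⟨p, q, h, e⟩ := hf
  refine ⟨p.comp (X + C 1), q.comp (X + C 1), fun k => ?_, fun k => ?_⟩
  · rw [eval_comp]
    simpa using h (k + 1)
  · rw [shift, e (k + 1), eval_comp, eval_comp]
    push_cast
    simp

lemma shift_smul (b : B K) (u : Seq K) :
    shift (b • u) = (⟨shift (b : Seq K), shift_memB b.2⟩ : B K) • shift u := rfl

lemma shift_span_stable {s : Set (Seq K)}
    (hs : ∀ x ∈ s, shift x ∈ Submodule.span (B K) s) :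
    ∀ u ∈ Submodule.span (B K) s, shift u ∈ Submodule.span (B K) s := by
  intro u hu
  induction hu using Submodule.span_induction with
  | mem x hx => exact hs x hx
  | zero =>
    have : shift (0 : Seq K) = 0 := rfl
    rw [this]; exact zero_mem _
  | add x y _ _ hx hy => exact add_mem hx hy
  | smul b x _ hx => rw [shift_smul]; exact Submodule.smul_mem _ _ hx

/-- confined sequences -/
def Confined (u : Seq K) : Prop :=
  ∃ W : Submodule (B K) (Seq K), W.FG ∧ (∀ w ∈ W, shift w ∈ W) ∧ u ∈ W


lemma confined_of_memB {b : Seq K} (hb : b ∈ B K) : Confined b := by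
  refine ⟨Submodule.span (B K) {1}, Submodule.fg_span_singleton _, ?_, ?_⟩
  · apply shift_span_stable
    intro x hx
    rw [Set.mem_singleton_iff] at hx
    subst hx
    exact Submodule.subset_span rfl
  · have : b = (⟨b, hb⟩ : B K) • (1 : Seq K) := by
      ext k; simp [smul_apply']
    rw [this]
    exact Submodule.smul_mem _ _ (Submodule.subset_span rfl)

lemma Confined.memB_mul {u : Seq K} (hu : Confined u) {b : Seq K} (hb : b ∈ B K) :
    Confined (b * u) := by
  obtain ⟨W, hfg, hst, hm⟩ := hu
  exact ⟨W, hfg, hst, Submodule.smul_mem W (⟨b, hb⟩ : B K) hm⟩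

lemma Confined.add {u v : Seq K} (hu : Confined u) (hv : Confined v) : Confined (u + v) := by
  obtain ⟨W1, h1, s1, m1⟩ := hu
  obtain ⟨W2, h2, s2, m2⟩ := hv
  refine ⟨W1 ⊔ W2, Submodule.FG.sup h1 h2, ?_, ?_⟩
  · intro w hw
    obtain ⟨x, hx, y, hy, rfl⟩ := Submodule.mem_sup.mp hw
    have : shift (x + y) = shift x + shift y := rfl
    rw [this]
    exact add_mem (Submodule.mem_sup_left (s1 x hx)) (Submodule.mem_sup_right (s2 y hy))
  · exact add_mem (Submodule.mem_sup_left m1) (Submodule.mem_sup_right m2)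

lemma Confined.neg {u : Seq K} (hu : Confined u) : Confined (-u) := by
  obtain ⟨W, hfg, hst, hm⟩ := hu
  exact ⟨W, hfg, hst, neg_mem hm⟩

lemma Confined.sub {u v : Seq K} (hu : Confined u) (hv : Confined v) : Confined (u - v) := by
  rw [sub_eq_add_neg]; exact hu.add hv.neg

lemma Confined.mul {u v : Seq K} (hu : Confined u) (hv : Confined v) : Confined (u * v) := by
  obtain ⟨W1, h1, s1, m1⟩ := hu
  obtain ⟨W2, h2, s2, m2⟩ := hv
  refine ⟨W1 * W2, Submodule.FG.mul h1 h2, ?_, Submodule.mul_mem_mul m1 m2⟩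
  intro w hw
  refine Submodule.mul_induction_on hw (fun x hx y hy => ?_) (fun x y hx hy => ?_)
  · have : shift (x * y) = shift x * shift y := rfl
    rw [this]
    exact Submodule.mul_mem_mul (s1 x hx) (s2 y hy)
  · have : shift (x + y) = shift x + shift y := rfl
    rw [this]
    exact add_mem hx hy

lemma confined_one : Confined (1 : Seq K) := confined_of_memB (one_mem _)

lemma confined_zero : Confined (0 : Seq K) := confined_of_memB (zero_mem _)

lemma Confined.pow {u : Seq K} (hu : Confined u) (n : ℕ) : Confined (u ^ n) := by
  induction n with
  | zero => simpa using confined_one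
  | succ n ih => rw [pow_succ]; exact ih.mul hu

lemma confined_sum {ι : Type*} (s : Finset ι) (f : ι → Seq K)
    (hf : ∀ i ∈ s, Confined (f i)) : Confined (∑ i ∈ s, f i) := by
  classical
  induction s using Finset.induction_on with
  | empty => simpa using confined_zero
  | insert _ _ hx ih =>
    rw [Finset.sum_insert hx]
    exact (hf _ (Finset.mem_insert_self _ _)).add
      (ih fun i hi => hf i (Finset.mem_insert_of_mem hi))


section Derivation

variable (D : Derivation K (RatFunc K) (RatFunc K))

lemma D_natCast (n : ℕ) : D ((n : RatFunc K)) = 0 := by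
  rw [show ((n : RatFunc K)) = algebraMap K (RatFunc K) ((n : K)) from (map_natCast _ n).symm]
  exact Derivation.map_algebraMap D _

lemma D_eval (r : Polynomial (RatFunc K)) (y : RatFunc K) (hy : D y = 0) :
    D (r.eval y) = ∑ n ∈ Finset.range (r.natDegree + 1), D (r.coeff n) * y ^ n := by
  conv_lhs => rw [Polynomial.eval_eq_sum_range]
  rw [map_sum]
  refine Finset.sum_congr rfl fun n _ => ?_
  rw [Derivation.leibniz]
  rw [Derivation.leibniz_pow, hy]
  simp [smul_eq_mul, mul_comm]

noncomputable def der (r : Polynomial (RatFunc K)) (m : ℕ) : Polynomial (RatFunc K) :=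
  ∑ n ∈ Finset.range (r.natDegree + 1), C (D (r.coeff n)) * (X + C ((m : ℕ) : RatFunc K)) ^ n

lemma eval_comp_shift (r : Polynomial (RatFunc K)) (m k : ℕ) :
    (r.comp (X + C ((m : ℕ) : RatFunc K))).eval ((k : ℕ) : RatFunc K)
      = r.eval (((k + m : ℕ) : ℕ) : RatFunc K) := by
  rw [eval_comp]
  push_cast
  simp

lemma der_eval (r : Polynomial (RatFunc K)) (m k : ℕ) :
    (der D r m).eval ((k : ℕ) : RatFunc K) = D (r.eval (((k + m : ℕ) : ℕ) : RatFunc K)) := by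
  rw [D_eval D r _ (D_natCast D _), der, eval_finset_sum]
  refine Finset.sum_congr rfl fun n _ => ?_
  push_cast
  simp

lemma confined_of_rec (u : Seq K) (M : ℕ)
    (a : Fin (M + 1) → Polynomial (RatFunc K))
    (ha : ∀ k : ℕ, (a (Fin.last M)).eval ((k : ℕ) : RatFunc K) ≠ 0)
    (hu : ∀ k : ℕ, ∑ i : Fin (M + 1), (a i).eval ((k : ℕ) : RatFunc K) * u (k + (i : ℕ)) = 0) :
    Confined u ∧ Confined (fun k => D (u k)) := by
  classical
  set Du : Seq K := fun k => D (u k) with hDu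
  set gens : Set (Seq K) :=
    ((fun j => shift^[j] u) '' Set.Iio M) ∪ ((fun j => shift^[j] Du) '' Set.Iio M) with hgens
  set W := Submodule.span (B K) gens with hW
  have hfin : gens.Finite := ((Set.finite_Iio M).image _).union ((Set.finite_Iio M).image _)
  have hqm : ∀ m k : ℕ,
      ((a (Fin.last M)).comp (X + C ((m : ℕ) : RatFunc K))).eval ((k : ℕ) : RatFunc K) ≠ 0 := by
    intro m k; rw [eval_comp_shift]; exact ha (k + m)
  -- identity I
  have idI : ∀ m : ℕ, shift^[m + M] u =
      ∑ i : Fin M, (frac (-((a i.castSucc).comp (X + C ((m : ℕ) : RatFunc K))))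
        ((a (Fin.last M)).comp (X + C ((m : ℕ) : RatFunc K))) (hqm m)) • shift^[m + (i : ℕ)] u := by
    intro m
    funext k
    have hk := hu (k + m)
    rw [Fin.sum_univ_castSucc] at hk
    simp only [Fin.coe_castSucc, Fin.val_last, Nat.add_assoc] at hk
    simp only [Finset.sum_apply, smul_apply', frac_apply, eval_neg, eval_comp_shift,
      shift_iterate_apply]
    set y : RatFunc K := ((k + m : ℕ) : RatFunc K) with hy
    set q := (a (Fin.last M)).eval y with hqdef
    have hq : q ≠ 0 := ha (k + m)
    rw [eq_comm]
    calc ∑ i : Fin M, -(a i.castSucc).eval y / q * u (k + (m + (i : ℕ)))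
        = (∑ i : Fin M, -((a i.castSucc).eval y * u (k + (m + (i : ℕ))))) / q := by
          rw [Finset.sum_div]
          exact Finset.sum_congr rfl fun i _ => by rw [div_mul_eq_mul_div, neg_mul]
      _ = (q * u (k + (m + M))) / q := by
          congr 1
          rw [Finset.sum_neg_distrib]
          linear_combination -hk
      _ = u (k + (m + M)) := mul_div_cancel_left₀ _ hq
  -- identity II
  have idII : ∀ m : ℕ, shift^[m + M] Du =
      (∑ i : Fin M, (frac (-((a i.castSucc).comp (X + C ((m : ℕ) : RatFunc K))))
        ((a (Fin.last M)).comp (X + C ((m : ℕ) : RatFunc K))) (hqm m)) • shift^[m + (i : ℕ)] Du)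
      + ∑ i : Fin (M + 1), (frac (-(der D (a i) m))
        ((a (Fin.last M)).comp (X + C ((m : ℕ) : RatFunc K))) (hqm m)) • shift^[m + (i : ℕ)] u := by
    intro m
    funext k
    -- differentiated recurrence
    have hk0 := congrArg D (hu (k + m))
    rw [map_sum, map_zero] at hk0
    have hk : ∑ i : Fin (M + 1), (D ((a i).eval (((k + m : ℕ)) : RatFunc K)) * u ((k + m) + (i : ℕ))
        + (a i).eval (((k + m : ℕ)) : RatFunc K) * Du ((k + m) + (i : ℕ))) = 0 := by
      rw [← hk0]
      refine Finset.sum_congr rfl fun i _ => ?_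
      rw [Derivation.leibniz]
      simp only [smul_eq_mul, hDu]
      ring
    rw [Finset.sum_add_distrib, Fin.sum_univ_castSucc, Fin.sum_univ_castSucc (n := M)] at hk
    simp only [Fin.coe_castSucc, Fin.val_last, Nat.add_assoc] at hk
    simp only [Pi.add_apply, Finset.sum_apply, smul_apply', frac_apply, eval_neg,
      eval_comp_shift, der_eval, shift_iterate_apply]
    set y : RatFunc K := ((k + m : ℕ) : RatFunc K) with hy
    set q := (a (Fin.last M)).eval y with hqdef
    have hq : q ≠ 0 := ha (k + m)
    rw [eq_comm]
    calc (∑ i : Fin M, -(a i.castSucc).eval y / q * Du (k + (m + (i : ℕ))))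
          + ∑ i : Fin (M + 1), -D ((a i).eval y) / q * u (k + (m + (i : ℕ)))
        = ((∑ i : Fin M, -((a i.castSucc).eval y * Du (k + (m + (i : ℕ)))))
            + ∑ i : Fin (M + 1), -(D ((a i).eval y) * u (k + (m + (i : ℕ))))) / q := by
          rw [add_div, Finset.sum_div, Finset.sum_div]
          congr 1
          · exact Finset.sum_congr rfl fun i _ => by rw [div_mul_eq_mul_div, neg_mul]
          · exact Finset.sum_congr rfl fun i _ => by rw [div_mul_eq_mul_div, neg_mul]
      _ = (q * Du (k + (m + M))) / q := by
          congr 1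
          rw [Finset.sum_neg_distrib, Finset.sum_neg_distrib, Fin.sum_univ_castSucc (n := M)]
          simp only [Fin.coe_castSucc, Fin.val_last]
          linear_combination -hk
      _ = Du (k + (m + M)) := mul_div_cancel_left₀ _ hq
  -- membership of all shifts
  have claim : ∀ n : ℕ, shift^[n] u ∈ W ∧ shift^[n] Du ∈ W := by
    intro n
    induction n using Nat.strong_induction_on with
    | _ n ih =>
      rcases lt_or_ge n M with h | h
      · exact ⟨Submodule.subset_span (Or.inl ⟨n, Set.mem_Iio.mpr h, rfl⟩),
          Submodule.subset_span (Or.inr ⟨n, Set.mem_Iio.mpr h, rfl⟩)⟩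
      · obtain ⟨m, rfl⟩ : ∃ m, n = m + M := ⟨n - M, (Nat.sub_add_cancel h).symm⟩
        have h1 : shift^[m + M] u ∈ W := by
          rw [idI m]
          exact Submodule.sum_mem _ fun i _ =>
            Submodule.smul_mem _ _ (ih (m + (i : ℕ)) (by have := i.isLt; omega)).1
        refine ⟨h1, ?_⟩
        rw [idII m]
        refine add_mem (Submodule.sum_mem _ fun i _ =>
          Submodule.smul_mem _ _ (ih (m + (i : ℕ)) (by have := i.isLt; omega)).2)
          (Submodule.sum_mem _ fun i _ => ?_)
        rcases Nat.lt_or_ge (i : ℕ) M with hi | hi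
        · exact Submodule.smul_mem _ _ (ih (m + (i : ℕ)) (by omega)).1
        · have hieq : (i : ℕ) = M := le_antisymm (Nat.lt_succ_iff.mp i.isLt) hi
          rw [hieq]
          exact Submodule.smul_mem _ _ h1
  have hstable : ∀ w ∈ W, shift w ∈ W := by
    apply shift_span_stable
    rintro x (⟨j, _, rfl⟩ | ⟨j, _, rfl⟩)
    · rw [← Function.iterate_succ_apply' shift j u]
      exact (claim (j + 1)).1
    · rw [← Function.iterate_succ_apply' shift j Du]
      exact (claim (j + 1)).2
  have hfg : W.FG := Submodule.fg_span hfin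
  exact ⟨⟨W, hfg, hstable, (claim 0).1⟩, ⟨W, hfg, hstable, (claim 0).2⟩⟩

end Derivation


section Noetherian

instance : CharZero (RatFunc K) :=
  charZero_of_injective_algebraMap (algebraMap K (RatFunc K)).injective

variable (K)

noncomputable def phi : Polynomial (RatFunc K) →+* Seq K :=
  Pi.ringHom fun k => Polynomial.evalRingHom ((k : ℕ) : RatFunc K)

lemma phi_mem (p : Polynomial (RatFunc K)) : phi K p ∈ B K :=
  ⟨p, 1, by simp, fun k => by simp [phi]; rfl⟩

noncomputable def psi : Polynomial (RatFunc K) →+* B K :=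
  (phi K).codRestrict (B K).toSubsemiring (phi_mem K)

lemma psi_apply (p : Polynomial (RatFunc K)) (k : ℕ) :
    ((psi K p : B K) : Seq K) k = p.eval ((k : ℕ) : RatFunc K) := rfl

def Sden : Submonoid (Polynomial (RatFunc K)) where
  carrier := {q | ∀ k : ℕ, q.eval ((k : ℕ) : RatFunc K) ≠ 0}
  one_mem' := by intro k; simp
  mul_mem' := by
    intro q1 q2 h1 h2 k
    rw [eval_mul]
    exact mul_ne_zero (h1 k) (h2 k)

lemma mem_Sden_iff (q : Polynomial (RatFunc K)) :
    q ∈ Sden K ↔ ∀ k : ℕ, q.eval ((k : ℕ) : RatFunc K) ≠ 0 := Iff.rfl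

lemma natCast_infinite_range : Set.Infinite (Set.range (fun n : ℕ => ((n : ℕ) : RatFunc K))) :=
  Set.infinite_range_of_injective Nat.cast_injective

lemma noetherianB : IsNoetherianRing (B K) := by
  letI : Algebra (Polynomial (RatFunc K)) (B K) := (psi K).toAlgebra
  haveI : IsLocalization (Sden K) (B K) := by
    refine ⟨?_, ?_, ?_⟩
    · rintro ⟨y, hy⟩
      refine isUnit_iff_exists.mpr ⟨frac 1 y hy, ?_, ?_⟩
      · apply Subtype.ext; funext k
        show y.eval ((k : ℕ) : RatFunc K) * (Polynomial.eval _ 1 / y.eval ((k : ℕ) : RatFunc K)) = 1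
        rw [eval_one]
        field_simp [div_self (hy k)]
        exact div_self (hy k)
      · apply Subtype.ext; funext k
        show (Polynomial.eval _ 1 / y.eval ((k : ℕ) : RatFunc K)) * y.eval ((k : ℕ) : RatFunc K) = 1
        rw [eval_one]
        field_simp [div_self (hy k)]
        exact div_self (hy k)
    · rintro ⟨z, p, q, hq, e⟩
      refine ⟨(p, ⟨q, hq⟩), ?_⟩
      apply Subtype.ext; funext k
      show z k * q.eval ((k : ℕ) : RatFunc K) = p.eval ((k : ℕ) : RatFunc K)
      rw [e k]
      exact div_mul_cancel₀ _ (hq k)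
    · intro p q h
      refine ⟨1, ?_⟩
      have heq : ∀ k : ℕ, p.eval ((k : ℕ) : RatFunc K) = q.eval ((k : ℕ) : RatFunc K) :=
        fun k => congrFun (congrArg Subtype.val h) k
      have : p = q := by
        apply Polynomial.eq_of_infinite_eval_eq
        apply Set.Infinite.mono _ (natCast_infinite_range K)
        rintro x ⟨n, rfl⟩
        exact heq n
      rw [this]
  exact IsLocalization.isNoetherianRing (Sden K) (B K)
    (inferInstance : IsNoetherianRing (Polynomial (RatFunc K)))

end Noetherian


section Extraction

lemma algMap_eval (e : Polynomial (Polynomial K)) (k : ℕ) :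
    algebraMap (Polynomial K) (RatFunc K) (e.eval ((k : Polynomial K)))
      = (e.map (algebraMap (Polynomial K) (RatFunc K))).eval ((k : ℕ) : RatFunc K) := by
  rw [eval_map, Polynomial.eval₂_at_natCast]

lemma denom_clear (r : Polynomial (RatFunc K)) :
    ∃ (g : Polynomial K) (e : Polynomial (Polynomial K)), g ≠ 0 ∧
      e.map (algebraMap (Polynomial K) (RatFunc K))
        = C (algebraMap (Polynomial K) (RatFunc K) g) * r := by
  induction r using Polynomial.induction_on with
  | C a =>
    obtain ⟨⟨n, dd⟩, hsurj⟩ := IsLocalization.surj (nonZeroDivisors (Polynomial K)) a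
    refine ⟨(dd : Polynomial K), C n, nonZeroDivisors.ne_zero dd.2, ?_⟩
    rw [Polynomial.map_C, ← hsurj, ← C_mul]
    ring_nf
  | add p q hp hq =>
    obtain ⟨g1, e1, h1, he1⟩ := hp
    obtain ⟨g2, e2, h2, he2⟩ := hq
    refine ⟨g1 * g2, C g2 * e1 + C g1 * e2, mul_ne_zero h1 h2, ?_⟩
    rw [Polynomial.map_add, Polynomial.map_mul, Polynomial.map_mul, Polynomial.map_C,
      Polynomial.map_C, he1, he2, map_mul, C_mul]
    ring
  | monomial n a ih =>
    obtain ⟨g, e, h, he⟩ := ih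
    refine ⟨g, e * X, h, ?_⟩
    rw [Polynomial.map_mul, Polynomial.map_X, he]
    ring

lemma precursive_of_confined (u : Seq K) (hu : Confined u) :
    ∃ (N : ℕ) (e : Fin (N + 1) → Polynomial (Polynomial K)),
      (∃ i, e i ≠ 0) ∧
      ∀ k : ℕ, ∑ i : Fin (N + 1),
        algebraMap (Polynomial K) (RatFunc K) ((e i).eval ((k : Polynomial K))) *
          u (k + (i : ℕ)) = 0 := by
  classical
  obtain ⟨W, hfg, hst, hm⟩ := hu
  haveI := noetherianB K
  haveI : IsNoetherian (B K) W := isNoetherian_of_fg_of_noetherian W hfg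
  set g : ℕ → Seq K := fun n => shift^[n] u with hg
  have hgW : ∀ n, g n ∈ W := by
    intro n; induction n with
    | zero => exact hm
    | succ n ih =>
      show shift^[n + 1] u ∈ W
      rw [Function.iterate_succ_apply']
      exact hst _ ih
  set V : Submodule (B K) (Seq K) := Submodule.span (B K) (Set.range g) with hV
  have hVW : V ≤ W := Submodule.span_le.mpr (by rintro x ⟨n, rfl⟩; exact hgW n)
  have hVfg : V.FG := by
    have h1 : (V.comap W.subtype).FG := IsNoetherian.noetherian _
    have h2 : (V.comap W.subtype).map W.subtype = V := by
      rw [Submodule.map_comap_subtype]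
      exact inf_eq_right.mpr hVW
    rw [← h2]
    exact h1.map _
  set Mon : ℕ → Submodule (B K) (Seq K) := fun n => Submodule.span (B K) (g '' Set.Iic n)
    with hMon
  have hMonMono : Monotone Mon := fun m n hmn =>
    Submodule.span_mono (Set.image_mono (Set.Iic_subset_Iic.mpr hmn))
  obtain ⟨T, hT⟩ := hVfg
  have hex : ∀ t ∈ (T : Set (Seq K)), ∃ n, t ∈ Mon n := by
    intro t ht
    have htV : t ∈ V := hT ▸ Submodule.subset_span ht
    have hVsup : V ≤ ⨆ n, Mon n := by
      rw [hV, Submodule.span_le]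
      rintro x ⟨n, rfl⟩
      exact Submodule.mem_iSup_of_mem n (Submodule.subset_span ⟨n, Set.mem_Iic.mpr le_rfl, rfl⟩)
    exact (Submodule.mem_iSup_of_directed _ hMonMono.directed_le).mp (hVsup htV)
  choose f hf using hex
  set N : ℕ := T.sup fun t => if h : t ∈ (T : Set (Seq K)) then f t h else 0 with hN
  have hVN : V ≤ Mon N := by
    rw [← hT, Submodule.span_le]
    intro t ht
    refine hMonMono ?_ (hf t ht)
    have : f t ht = (if h : t ∈ (T : Set (Seq K)) then f t h else 0) := by rw [dif_pos ht]
    rw [this]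
    exact Finset.le_sup (f := fun t => if h : t ∈ (T : Set (Seq K)) then f t h else 0)
      (Finset.mem_coe.mp ht)
  have hmem : g (N + 1) ∈ Mon N := hVN (Submodule.subset_span ⟨N + 1, rfl⟩)
  have himg : g '' Set.Iic N = Set.range (fun i : Fin (N + 1) => g (i : ℕ)) := by
    ext x; constructor
    · rintro ⟨n, hn, rfl⟩; exact ⟨⟨n, Nat.lt_succ_of_le hn⟩, rfl⟩
    · rintro ⟨i, rfl⟩; exact ⟨(i : ℕ), Set.mem_Iic.mpr (Nat.lt_succ_iff.mp i.isLt), rfl⟩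
  have hmem2 : g (N + 1) ∈ Submodule.span (B K)
      (Set.range (fun i : Fin (N + 1) => g (i : ℕ))) := by
    rw [← himg]; exact hmem
  obtain ⟨b, hb⟩ := (Submodule.mem_span_range_iff_exists_fun (B K)).mp hmem2
  -- pointwise form
  have hbk : ∀ k : ℕ, ∑ i : Fin (N + 1), ((b i : Seq K) k) * u (k + (i : ℕ)) = u (k + (N + 1)) := by
    intro k
    have := congrFun hb k
    simpa [Finset.sum_apply, smul_apply', shift_iterate_apply, hg] using this
  -- choose fractions for the b i
  have hbB := fun i : Fin (N + 1) => (b i).2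
  choose p q hq e using hbB
  set qq : Polynomial (RatFunc K) := ∏ i : Fin (N + 1), q i with hqq
  have hqqk : ∀ k : ℕ, qq.eval ((k : ℕ) : RatFunc K) = ∏ i : Fin (N + 1), (q i).eval ((k : ℕ) : RatFunc K) := by
    intro k; rw [hqq, eval_prod]
  set r : Fin (N + 2) → Polynomial (RatFunc K) :=
    Fin.snoc (fun i => p i * ∏ j ∈ Finset.univ.erase i, q j) (-qq) with hr
  have hrec : ∀ k : ℕ, ∑ i : Fin (N + 2), (r i).eval ((k : ℕ) : RatFunc K) * u (k + (i : ℕ)) = 0 := by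
    intro k
    rw [Fin.sum_univ_castSucc]
    have hlast : r (Fin.last (N + 1)) = -qq := by rw [hr]; simp
    have hcast : ∀ i : Fin (N + 1), r i.castSucc = p i * ∏ j ∈ Finset.univ.erase i, q j := by
      intro i; rw [hr]; simp
    have key : ∀ i : Fin (N + 1),
        (r i.castSucc).eval ((k : ℕ) : RatFunc K) * u (k + ((i.castSucc : Fin (N + 2)) : ℕ))
          = qq.eval ((k : ℕ) : RatFunc K) * (((b i : Seq K) k) * u (k + (i : ℕ))) := by
      intro i
      rw [hcast i, Fin.coe_castSucc, e i k, eval_mul, eval_prod, hqqk,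
        ← Finset.mul_prod_erase Finset.univ (fun j => (q j).eval ((k : ℕ) : RatFunc K))
          (Finset.mem_univ i)]
      have hqi := hq i k
      field_simp
    calc (∑ i : Fin (N + 1), (r i.castSucc).eval ((k : ℕ) : RatFunc K)
            * u (k + ((i.castSucc : Fin (N + 2)) : ℕ)))
          + (r (Fin.last (N + 1))).eval ((k : ℕ) : RatFunc K) * u (k + ((Fin.last (N + 1) : Fin (N+2)) : ℕ))
        = qq.eval ((k : ℕ) : RatFunc K) * (∑ i : Fin (N + 1), ((b i : Seq K) k) * u (k + (i : ℕ)))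
          + (-qq).eval ((k : ℕ) : RatFunc K) * u (k + (N + 1)) := by
          rw [Finset.mul_sum, hlast, Fin.val_last]
          exact congrArg₂ (· + ·) (Finset.sum_congr rfl fun i _ => key i) rfl
      _ = 0 := by rw [hbk k, eval_neg]; ring
  -- clear denominators over K[z]
  choose gg E hgg hE using fun i : Fin (N + 2) => denom_clear (r i)
  set G : Polynomial K := ∏ i : Fin (N + 2), gg i with hG
  set e' : Fin (N + 2) → Polynomial (Polynomial K) :=
    fun i => C (∏ j ∈ Finset.univ.erase i, gg j) * E i with he'
  have he'map : ∀ i, (e' i).map (algebraMap (Polynomial K) (RatFunc K))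
      = C (algebraMap (Polynomial K) (RatFunc K) G) * r i := by
    intro i
    rw [he']
    rw [Polynomial.map_mul, Polynomial.map_C, hE i, ← mul_assoc, ← C_mul, ← map_mul]
    congr 3
    rw [hG]
    exact Finset.prod_erase_mul Finset.univ _ (Finset.mem_univ i)
  have hqqne : qq ≠ 0 := by
    rw [hqq]
    refine Finset.prod_ne_zero_iff.mpr fun i _ => fun h0 => hq i 0 ?_
    rw [h0]; simp
  have hGne : G ≠ 0 := by
    rw [hG]
    exact Finset.prod_ne_zero_iff.mpr fun i _ => hgg i
  have hlastne : e' (Fin.last (N + 1)) ≠ 0 := by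
    intro h0
    have h1 := he'map (Fin.last (N + 1))
    rw [h0, Polynomial.map_zero] at h1
    have hrlast : r (Fin.last (N + 1)) = -qq := by rw [hr]; simp
    rw [hrlast] at h1
    have hCne : (C (algebraMap (Polynomial K) (RatFunc K) G) : Polynomial (RatFunc K)) ≠ 0 := by
      rw [Polynomial.C_ne_zero]
      exact (map_ne_zero_iff _ (IsFractionRing.injective (Polynomial K) (RatFunc K))).mpr hGne
    exact (mul_ne_zero hCne (neg_ne_zero.mpr hqqne)) h1.symm
  refine ⟨N + 1, e', ⟨Fin.last (N + 1), hlastne⟩, fun k => ?_⟩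
  have hterm : ∀ i : Fin (N + 2),
      algebraMap (Polynomial K) (RatFunc K) ((e' i).eval ((k : Polynomial K))) * u (k + (i : ℕ))
        = algebraMap (Polynomial K) (RatFunc K) G
            * ((r i).eval ((k : ℕ) : RatFunc K) * u (k + (i : ℕ))) := by
    intro i
    rw [algMap_eval, he'map i, eval_mul, eval_C]
    ring
  rw [Finset.sum_congr rfl fun i _ => hterm i, ← Finset.mul_sum, hrec k, mul_zero]

end Extraction


lemma constSeq_memB (a : RatFunc K) : (fun _ : ℕ => a) ∈ B K :=
  ⟨C a, 1, by simp, fun k => by simp⟩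

end PRecAux

open PRecAux Polynomial


/-- **Theorem (linear recurrence for the remainders).**
Let `K` be a field of characteristic zero, `D` the derivation of `K(z)` extending
`d/dz` on `K[z]`, and `F ∈ K(z)[Y]` a polynomial of degree `d > 0` in `Y`.
If `(P_k)` and `(Q_k)` are sequences of rational functions each satisfying a
nontrivial linear recurrence whose coefficients are polynomials in `k` over `K[z]`
(with leading coefficient nonvanishing at every natural number), `Q_k ≠ 0`, and
`H_k := Q_k^{max(2,d)}·((P_k/Q_k)' − F(P_k/Q_k))`, then `(H_k)` satisfies a
nontrivial linear recurrence with coefficients that are polynomials in `k` over `K[z]`. -/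
theorem remainder_sequence_is_p_recursive {K : Type*} [Field K] [CharZero K]
    (D : Derivation K (RatFunc K) (RatFunc K))
    (hD : ∀ p : Polynomial K, D (algebraMap (Polynomial K) (RatFunc K) p) =
      algebraMap (Polynomial K) (RatFunc K) (Polynomial.derivative p))
    (F : Polynomial (RatFunc K)) (d : ℕ) (hd : 0 < d) (hdeg : F.natDegree = d)
    (P Q : ℕ → RatFunc K) (hQ0 : ∀ k, Q k ≠ 0)
    -- the recurrence satisfied by `(P_k)`
    (M : ℕ) (c : Fin (M + 1) → Polynomial (Polynomial K))
    (hc : ∀ k : ℕ, Polynomial.eval ((k : Polynomial K)) (c (Fin.last M)) ≠ 0)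
    (hP : ∀ k : ℕ, ∑ i : Fin (M + 1),
      algebraMap (Polynomial K) (RatFunc K) (Polynomial.eval ((k : Polynomial K)) (c i)) *
        P (k + (i : ℕ)) = 0)
    -- the recurrence satisfied by `(Q_k)`
    (M' : ℕ) (c' : Fin (M' + 1) → Polynomial (Polynomial K))
    (hc' : ∀ k : ℕ, Polynomial.eval ((k : Polynomial K)) (c' (Fin.last M')) ≠ 0)
    (hQ : ∀ k : ℕ, ∑ i : Fin (M' + 1),
      algebraMap (Polynomial K) (RatFunc K) (Polynomial.eval ((k : Polynomial K)) (c' i)) *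
        Q (k + (i : ℕ)) = 0)
    -- the sequence of remainders
    (H : ℕ → RatFunc K)
    (hH : ∀ k, H k = Q k ^ max 2 d *
      (D (P k / Q k) - Polynomial.eval (P k / Q k) F)) :
    ∃ (N : ℕ) (e : Fin (N + 1) → Polynomial (Polynomial K)),
      (∃ i, e i ≠ 0) ∧
      ∀ k : ℕ, ∑ i : Fin (N + 1),
        algebraMap (Polynomial K) (RatFunc K) (Polynomial.eval ((k : Polynomial K)) (e i)) *
          H (k + (i : ℕ)) = 0 := by
  have hinj := IsFractionRing.injective (Polynomial K) (RatFunc K)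
  -- confinement of P and D∘P
  have keyP := confined_of_rec D P M
    (fun i => (c i).map (algebraMap (Polynomial K) (RatFunc K)))
    (by
      intro k h
      apply hc k
      exact (map_eq_zero_iff _ hinj).mp ((algMap_eval _ k).trans h))
    (by
      intro k
      rw [show (∑ i : Fin (M + 1),
          ((c i).map (algebraMap (Polynomial K) (RatFunc K))).eval ((k : ℕ) : RatFunc K)
            * P (k + (i : ℕ)))
        = ∑ i : Fin (M + 1), algebraMap (Polynomial K) (RatFunc K)
            ((c i).eval ((k : Polynomial K))) * P (k + (i : ℕ)) from
        Finset.sum_congr rfl fun i _ => by rw [← algMap_eval]]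
      exact hP k)
  have keyQ := confined_of_rec D Q M'
    (fun i => (c' i).map (algebraMap (Polynomial K) (RatFunc K)))
    (by
      intro k h
      apply hc' k
      exact (map_eq_zero_iff _ hinj).mp ((algMap_eval _ k).trans h))
    (by
      intro k
      rw [show (∑ i : Fin (M' + 1),
          ((c' i).map (algebraMap (Polynomial K) (RatFunc K))).eval ((k : ℕ) : RatFunc K)
            * Q (k + (i : ℕ)))
        = ∑ i : Fin (M' + 1), algebraMap (Polynomial K) (RatFunc K)
            ((c' i).eval ((k : Polynomial K))) * Q (k + (i : ℕ)) from
        Finset.sum_congr rfl fun i _ => by rw [← algMap_eval]]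
      exact hQ k)
  obtain ⟨hPc, hDPc⟩ := keyP
  obtain ⟨hQc, hDQc⟩ := keyQ
  set m := max 2 d with hm
  have hm2 : 2 ≤ m := le_max_left _ _
  have hmd : d ≤ m := le_max_right _ _
  -- the remainder sequence as a polynomial combination
  have hHeq : H = (Q ^ (m - 2) * (Q * (fun k => D (P k)) - P * (fun k => D (Q k))))
      - ∑ j ∈ Finset.range (d + 1),
          (fun _ : ℕ => F.coeff j) * P ^ j * Q ^ (m - j) := by
    funext k
    have hQk := hQ0 k
    simp only [Pi.sub_apply, Pi.mul_apply, Pi.pow_apply, Finset.sum_apply]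
    rw [hH k, Derivation.leibniz_div, mul_sub]
    congr 1
    · simp only [smul_eq_mul]
      rw [show m = (m - 2) + 2 from (Nat.sub_add_cancel hm2).symm, pow_add]
      field_simp
      simp only [Nat.add_sub_cancel, Nat.add_sub_cancel_left]
      ring
    · rw [Polynomial.eval_eq_sum_range, hdeg, Finset.mul_sum]
      refine Finset.sum_congr rfl fun j hj => ?_
      have hjd : j ≤ d := Nat.lt_succ_iff.mp (Finset.mem_range.mp hj)
      rw [div_pow, show m = (m - j) + j from (Nat.sub_add_cancel (hjd.trans hmd)).symm, pow_add]
      field_simp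
      simp only [Nat.add_sub_cancel, Nat.add_sub_cancel_left]
      ring
  have hHc : Confined H := by
    rw [hHeq]
    refine Confined.sub ?_ ?_
    · exact (hQc.pow (m - 2)).mul ((hQc.mul hDPc).sub (hPc.mul hDQc))
    · exact confined_sum _ _ fun j _ =>
        ((confined_of_memB (constSeq_memB (F.coeff j))).mul (hPc.pow j)).mul (hQc.pow (m - j))
  exact precursive_of_confined H hHc
end

section
/- Let K be a field equipped with a derivation D (a differential field). Let (a_k), k ≥ 1, be elements of K with D(a_k) ≠ 0 for all k, let f₀, f₁, f₂ be elements of K, and let (P_k) and (Q_k) be sequences in K, both satisfying the recurrence u_{k+2} = u_{k+1} + a_{k+2}·u_k for all k ≥ 0 (with arbitrary initial values). Define H_k := D(P_k)·Q_k − P_k·D(Q_k) − f₀·Q_k² − f₁·P_k·Q_k − f₂·P_k². Then for all k ≥ 3: (1/D(a_{k+1}))·H_{k+1} + (a_k/D(a_k) − (a_{k+1}+1)/D(a_{k+1}))·H_k − (a_k(a_k+1)/D(a_k) + a_{k+1}(a_{k+1}+1)/D(a_{k+1}))·H_{k−1} − ((a_k+1)/D(a_k) − a_{k+1}/D(a_{k+1}))·a_k²·H_{k−2}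 + (a_{k−1}²·a_k²/D(a_k))·H_{k−3} = 0. -/
/-- **Proposition (explicit recurrence for Riccati remainders).**
In a differential field `(K, D)`, if `(P_k)` and `(Q_k)` both satisfy
`u_{k+2} = u_{k+1} + a_{k+2}·u_k` and
`H_k := D(P_k)·Q_k − P_k·D(Q_k) − f₀·Q_k² − f₁·P_k·Q_k − f₂·P_k²`
(the numerator of the Riccati remainder for `F(Y) = f₀ + f₁Y + f₂Y²`), with
`D(a_k) ≠ 0` for all `k ≥ 1`, then `(H_k)` satisfies the stated fourth-order
linear recurrence, whose coefficients do not depend on `f₀, f₁, f₂`. -/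
theorem riccati_remainder_recurrence {K : Type*} [Field K]
    (D : K → K)
    (hDadd : ∀ x y : K, D (x + y) = D x + D y)
    (hDmul : ∀ x y : K, D (x * y) = D x * y + x * D y)
    (a : ℕ → K) (ha : ∀ k ≥ 1, D (a k) ≠ 0)
    (f₀ f₁ f₂ : K)
    (P Q : ℕ → K)
    (hP : ∀ k : ℕ, P (k + 2) = P (k + 1) + a (k + 2) * P k)
    (hQ : ∀ k : ℕ, Q (k + 2) = Q (k + 1) + a (k + 2) * Q k)
    (H : ℕ → K)
    (hH : ∀ k, H k = D (P k) * Q k - P k * D (Q k)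
      - f₀ * Q k ^ 2 - f₁ * (P k * Q k) - f₂ * P k ^ 2) :
    ∀ k ≥ 3,
      (1 / D (a (k + 1))) * H (k + 1)
        + (a k / D (a k) - (a (k + 1) + 1) / D (a (k + 1))) * H k
        - (a k * (a k + 1) / D (a k) + a (k + 1) * (a (k + 1) + 1) / D (a (k + 1))) * H (k - 1)
        - ((a k + 1) / D (a k) - a (k + 1) / D (a (k + 1))) * a k ^ 2 * H (k - 2)
        + a (k - 1) ^ 2 * a k ^ 2 / D (a k) * H (k - 3) = 0 := by
  intro k hk
  obtain ⟨m, rfl⟩ : ∃ m, k = m + 3 := ⟨k - 3, by omega⟩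
  have e1 : m + 3 - 1 = m + 2 := rfl
  have e2 : m + 3 - 2 = m + 1 := rfl
  have e3 : m + 3 - 3 = m := rfl
  rw [e1, e2, e3]
  have hP2 : P (m + 2) = P (m + 1) + a (m + 2) * P m := hP m
  have hQ2 : Q (m + 2) = Q (m + 1) + a (m + 2) * Q m := hQ m
  have hP3 : P (m + 3) = P (m + 2) + a (m + 3) * P (m + 1) := hP (m + 1)
  have hQ3 : Q (m + 3) = Q (m + 2) + a (m + 3) * Q (m + 1) := hQ (m + 1)
  have hP4 : P (m + 4) = P (m + 3) + a (m + 4) * P (m + 2) := hP (m + 2)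
  have hQ4 : Q (m + 4) = Q (m + 3) + a (m + 4) * Q (m + 2) := hQ (m + 2)
  have hDP2 : D (P (m + 2)) = D (P (m + 1)) + (D (a (m + 2)) * P m + a (m + 2) * D (P m)) := by
    rw [hP2, hDadd, hDmul]
  have hDQ2 : D (Q (m + 2)) = D (Q (m + 1)) + (D (a (m + 2)) * Q m + a (m + 2) * D (Q m)) := by
    rw [hQ2, hDadd, hDmul]
  have hDP3 : D (P (m + 3)) = D (P (m + 2)) + (D (a (m + 3)) * P (m + 1) + a (m + 3) * D (P (m + 1))) := by
    rw [hP3, hDadd, hDmul]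
  have hDQ3 : D (Q (m + 3)) = D (Q (m + 2)) + (D (a (m + 3)) * Q (m + 1) + a (m + 3) * D (Q (m + 1))) := by
    rw [hQ3, hDadd, hDmul]
  have hDP4 : D (P (m + 4)) = D (P (m + 3)) + (D (a (m + 4)) * P (m + 2) + a (m + 4) * D (P (m + 2))) := by
    rw [hP4, hDadd, hDmul]
  have hDQ4 : D (Q (m + 4)) = D (Q (m + 3)) + (D (a (m + 4)) * Q (m + 2) + a (m + 4) * D (Q (m + 2))) := by
    rw [hQ4, hDadd, hDmul]
  have h3 : D (a (m + 3)) ≠ 0 := ha (m + 3) (by omega)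
  have h4 : D (a (m + 4)) ≠ 0 := ha (m + 4) (by omega)
  rw [hH (m + 4), hH (m + 3), hH (m + 2), hH (m + 1), hH m,
    hDP4, hDQ4, hDP3, hDQ3, hDP2, hDQ2, hP4, hQ4, hP3, hQ3, hP2, hQ2]
  have e4 : m + 3 + 1 = m + 4 := rfl
  rw [e4]
  generalize P m = p0 at *
  generalize Q m = q0 at *
  generalize P (m+1) = p1 at *
  generalize Q (m+1) = q1 at *
  generalize D p0 = dp0
  generalize D q0 = dq0
  generalize D p1 = dp1
  generalize D q1 = dq1
  generalize ha2 : a (m+2) = a2 at *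
  generalize ha3 : a (m+3) = a3 at *
  generalize ha4 : a (m+4) = a4 at *
  generalize D a2 = da2
  generalize hd3 : D a3 = da3 at *
  generalize hd4 : D a4 = da4 at *
  field_simp
  have hu : da3 * da3⁻¹ = 1 := mul_inv_cancel₀ h3
  have hv : da4 * da4⁻¹ = 1 := mul_inv_cancel₀ h4
  ring
end

section
/- Let K be a field equipped with a derivation D. Let (a_k) and (b_k), k ≥ 1, be elements of K with b_k ≠ 0 for all k, and let (P_k) and (Q_k) be sequences in K, both satisfying the recurrence u_{k+2} = b_{k+2}·u_{k+1} + a_{k+2}·u_k for all k ≥ 0. Define ã_1 := a_1/b_1 and ã_k := a_k/(b_k·b_{k−1}) for k ≥ 2, and set P̃_k := P_k/(b_1·b_2⋯b_k) and Q̃_k := Q_k/(b_1·b_2⋯b_k). Then both (P̃_k) and (Q̃_k) satisfy the recurrence u_{k+2} = u_{k+1} + ã_{k+2}·u_k for all k ≥ 0, and consequently, if moreover D(ã_k) ≠ 0 for all k and f₀, f₁, f₂ ∈ K, the sequence H̃_k := D(P̃_k)·Q̃_k − P̃_k·D(Q̃_k) − f₀·Q̃_k² − f₁·P̃_k·Q̃_k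 − f₂·P̃_k² satisfies, for all k ≥ 3: (1/D(ã_{k+1}))·H̃_{k+1} + (ã_k/D(ã_k) − (ã_{k+1}+1)/D(ã_{k+1}))·H̃_k − (ã_k(ã_k+1)/D(ã_k) + ã_{k+1}(ã_{k+1}+1)/D(ã_{k+1}))·H̃_{k−1} − ((ã_k+1)/D(ã_k) − ã_{k+1}/D(ã_{k+1}))·ã_k²·H̃_{k−2} + (ã_{k−1}²·ã_k²/D(ã_k))·H̃_{k−3} = 0. -/
/-- **Corollary (reduction to a regular continued fraction).**
If `(P_k)` and `(Q_k)` satisfy `u_{k+2} = b_{k+2}·u_{k+1} + a_{k+2}·u_k` with all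
`b_k ≠ 0`, then the normalized sequences `P̃_k := P_k/(b₁⋯b_k)`, `Q̃_k := Q_k/(b₁⋯b_k)`
satisfy `u_{k+2} = u_{k+1} + ã_{k+2}·u_k` where `ã₁ = a₁/b₁` and
`ã_k = a_k/(b_k·b_{k−1})` for `k ≥ 2`; consequently, when `D(ã_k) ≠ 0` for all
`k ≥ 1`, the corresponding remainders `H̃_k` satisfy the fourth-order recurrence of
the Riccati proposition with `a` replaced by `ã`. -/
theorem riccati_remainder_recurrence_general {K : Type*} [Field K]
    (D : K → K)
    (hDadd : ∀ x y : K, D (x + y) = D x + D y)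
    (hDmul : ∀ x y : K, D (x * y) = D x * y + x * D y)
    (a b : ℕ → K) (hb : ∀ k ≥ 1, b k ≠ 0)
    (P Q : ℕ → K)
    (hP : ∀ k : ℕ, P (k + 2) = b (k + 2) * P (k + 1) + a (k + 2) * P k)
    (hQ : ∀ k : ℕ, Q (k + 2) = b (k + 2) * Q (k + 1) + a (k + 2) * Q k)
    (ta : ℕ → K)
    (hta1 : ta 1 = a 1 / b 1)
    (hta : ∀ k ≥ 2, ta k = a k / (b k * b (k - 1)))
    (tP tQ : ℕ → K)
    (htP : ∀ k : ℕ, tP k = P k / ∏ i ∈ Finset.Icc 1 k, b i)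
    (htQ : ∀ k : ℕ, tQ k = Q k / ∏ i ∈ Finset.Icc 1 k, b i) :
    (∀ k : ℕ, tP (k + 2) = tP (k + 1) + ta (k + 2) * tP k) ∧
    (∀ k : ℕ, tQ (k + 2) = tQ (k + 1) + ta (k + 2) * tQ k) ∧
    (∀ (_ : ∀ k ≥ 1, D (ta k) ≠ 0) (f₀ f₁ f₂ : K) (tH : ℕ → K),
      (∀ k, tH k = D (tP k) * tQ k - tP k * D (tQ k)
        - f₀ * tQ k ^ 2 - f₁ * (tP k * tQ k) - f₂ * tP k ^ 2) →
      ∀ k ≥ 3,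
        (1 / D (ta (k + 1))) * tH (k + 1)
          + (ta k / D (ta k) - (ta (k + 1) + 1) / D (ta (k + 1))) * tH k
          - (ta k * (ta k + 1) / D (ta k)
              + ta (k + 1) * (ta (k + 1) + 1) / D (ta (k + 1))) * tH (k - 1)
          - ((ta k + 1) / D (ta k) - ta (k + 1) / D (ta (k + 1))) * ta k ^ 2 * tH (k - 2)
          + ta (k - 1) ^ 2 * ta k ^ 2 / D (ta k) * tH (k - 3) = 0) := by

  have hProd : ∀ k : ℕ, (∏ i ∈ Finset.Icc 1 k, b i) ≠ 0 := by
    intro k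
    refine Finset.prod_ne_zero_iff.mpr fun i hi => hb i (Finset.mem_Icc.mp hi).1
  have key : ∀ (u tu : ℕ → K),
      (∀ k : ℕ, u (k + 2) = b (k + 2) * u (k + 1) + a (k + 2) * u k) →
      (∀ k : ℕ, tu k = u k / ∏ i ∈ Finset.Icc 1 k, b i) →
      ∀ k : ℕ, tu (k + 2) = tu (k + 1) + ta (k + 2) * tu k := by
    intro u tu hu htu k
    have h2 : ta (k + 2) = a (k + 2) / (b (k + 2) * b (k + 1)) := by
      have := hta (k + 2) (by omega)
      simpa using this
    have e1 : (∏ i ∈ Finset.Icc 1 (k + 2), b i)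
        = (∏ i ∈ Finset.Icc 1 (k + 1), b i) * b (k + 2) :=
      Finset.prod_Icc_succ_top (by omega) b
    have e2 : (∏ i ∈ Finset.Icc 1 (k + 1), b i)
        = (∏ i ∈ Finset.Icc 1 k, b i) * b (k + 1) :=
      Finset.prod_Icc_succ_top (by omega) b
    rw [htu, htu, htu, hu, h2, e1, e2]
    have hb1 := hb (k + 1) (by omega)
    have hb2 := hb (k + 2) (by omega)
    have hp := hProd k
    field_simp
  have hP' := key P tP hP htP
  have hQ' := key Q tQ hQ htQ
  refine ⟨hP', hQ', ?_⟩
  intro hD f₀ f₁ f₂ tH htH k hk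
  obtain ⟨m, rfl⟩ : ∃ m, k = m + 3 := ⟨k - 3, by omega⟩
  simp only [show m + 3 + 1 = m + 4 from rfl, show m + 3 - 1 = m + 2 from rfl,
    show m + 3 - 2 = m + 1 from rfl, show m + 3 - 3 = m from rfl, htH]
  have eP2 := hP' m
  have eP3 := hP' (m + 1)
  have eP4 := hP' (m + 2)
  have eQ2 := hQ' m
  have eQ3 := hQ' (m + 1)
  have eQ4 := hQ' (m + 2)
  have dP2 : D (tP (m + 2)) = D (tP (m + 1)) + (D (ta (m + 2)) * tP m + ta (m + 2) * D (tP m)) := by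
    rw [eP2, hDadd, hDmul]
  have dP3 : D (tP (m + 3)) = D (tP (m + 2)) + (D (ta (m + 3)) * tP (m + 1) + ta (m + 3) * D (tP (m + 1))) := by
    rw [eP3, hDadd, hDmul]
  have dP4 : D (tP (m + 4)) = D (tP (m + 3)) + (D (ta (m + 4)) * tP (m + 2) + ta (m + 4) * D (tP (m + 2))) := by
    rw [eP4, hDadd, hDmul]
  have dQ2 : D (tQ (m + 2)) = D (tQ (m + 1)) + (D (ta (m + 2)) * tQ m + ta (m + 2) * D (tQ m)) := by
    rw [eQ2, hDadd, hDmul]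
  have dQ3 : D (tQ (m + 3)) = D (tQ (m + 2)) + (D (ta (m + 3)) * tQ (m + 1) + ta (m + 3) * D (tQ (m + 1))) := by
    rw [eQ3, hDadd, hDmul]
  have dQ4 : D (tQ (m + 4)) = D (tQ (m + 3)) + (D (ta (m + 4)) * tQ (m + 2) + ta (m + 4) * D (tQ (m + 2))) := by
    rw [eQ4, hDadd, hDmul]
  rw [dP4, dP3, dP2, dQ4, dQ3, dQ2, eP4, eP3, eP2, eQ4, eQ3, eQ2]
  have h3 := hD (m + 3) (by omega)
  have h4 := hD (m + 4) (by omega)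
  generalize hg3 : D (ta (m + 3)) = x3 at h3 ⊢
  generalize hg4 : D (ta (m + 4)) = x4 at h4 ⊢
  generalize D (ta (m + 2)) = x2
  generalize ta (m + 2) = t2
  generalize ta (m + 3) = t3
  generalize ta (m + 4) = t4
  generalize tP m = p0
  generalize tP (m + 1) = p1
  generalize D (tP m) = dp0
  generalize D (tP (m + 1)) = dp1
  generalize tQ m = q0
  generalize tQ (m + 1) = q1
  generalize D (tQ m) = dq0
  generalize D (tQ (m + 1)) = dq1
  field_simp
  have c3 : x3 ^ 3 * x3⁻¹ ^ 3 = 1 := by rw [← mul_pow, mul_inv_cancel₀ h3, one_pow]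
  have c4 : x4 ^ 4 * x4⁻¹ ^ 4 = 1 := by rw [← mul_pow, mul_inv_cancel₀ h4, one_pow]
  ring
end

section
/- Let K be a field of characteristic zero, let ℓ ≥ 1 be an integer, and let u : ℕ → K be a sequence. Then u is P-recursive if and only if, for every j in {0, 1, …, ℓ−1}, the section k ↦ u(ℓk + j) is P-recursive. -/
open Polynomial Finset in
private lemma PRec.eventually_eval_ne {K : Type*} [Field K] [CharZero K] {p : K[X]} (hp : p ≠ 0) :
    ∃ N : ℕ, ∀ n ≥ N, p.eval (n : K) ≠ 0 := by
  have hfin : {n : ℕ | p.eval (n : K) = 0}.Finite := by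
    have h2 := Polynomial.finite_setOf_isRoot hp
    have : {n : ℕ | p.eval (n : K) = 0} = (Nat.cast : ℕ → K) ⁻¹' {x | p.IsRoot x} := by
      ext n; simp [Polynomial.IsRoot]
    rw [this]
    exact Set.Finite.preimage (Nat.cast_injective.injOn) h2
  obtain ⟨N, hN⟩ := hfin.bddAbove
  exact ⟨N + 1, fun n hn h => by have := hN h; omega⟩

open Polynomial Finset in
private lemma PRec.comp_linear_ne_zero {K : Type*} [Field K] [CharZero K] {p : K[X]} (hp : p ≠ 0)
    {a c : K} (ha : a ≠ 0) : p.comp (C a * X + C c) ≠ 0 := by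
  intro h
  apply hp
  apply Polynomial.funext
  intro y
  have := congrArg (Polynomial.eval ((y - c)/a)) h
  rw [eval_comp] at this
  simpa [mul_div_cancel₀ _ ha] using this

/-- A sequence `u : ℕ → K` is P-recursive if it satisfies a nontrivial linear
recurrence with polynomial coefficients. -/
def IsPRecursive {K : Type*} [Field K] (u : ℕ → K) : Prop :=
  ∃ (r : ℕ) (p : Fin (r + 1) → Polynomial K),
    (∃ i, p i ≠ 0) ∧
    ∀ n : ℕ, ∑ i : Fin (r + 1), Polynomial.eval (n : K) (p i) * u (n + (i : ℕ)) = 0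

open Polynomial Finset in
private def PolyRec {K : Type*} [Field K] (u : ℕ → K) (r : ℕ) (p : ℕ → K[X]) : Prop :=
  ∀ n : ℕ, ∑ i ∈ range (r + 1), (p i).eval (n : K) * u (n + i) = 0

section Pieces
open Polynomial Finset
variable {K : Type*} [Field K]

private lemma isPRecursive_of (v : ℕ → K) (S : ℕ) (P : ℕ → K[X]) (h0 : ∃ s, s ≤ S ∧ P s ≠ 0)
    (h : PolyRec v S P) : IsPRecursive v := by
  obtain ⟨s, hs, hPs⟩ := h0
  refine ⟨S, fun i => P i, ⟨⟨s, by omega⟩, hPs⟩, fun n => ?_⟩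
  rw [Fin.sum_univ_eq_sum_range (fun i => (P i).eval (n : K) * v (n + i))]
  exact h n

private lemma isPRecursive_iff' (u : ℕ → K) :
    IsPRecursive u ↔ ∃ r, ∃ p : ℕ → K[X], p r ≠ 0 ∧ PolyRec u r p := by
  constructor
  · rintro ⟨r, p, ⟨i0, hi0⟩, hrec⟩
    classical
    set p' : ℕ → K[X] := fun i => if h : i < r + 1 then p ⟨i, h⟩ else 0 with hp'
    have hne : (((range (r+1)).filter (fun i => p' i ≠ 0))).Nonempty := by
      refine ⟨i0, ?_⟩
      simp only [mem_filter, mem_range]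
      exact ⟨i0.isLt, by simp [hp', i0.isLt, Nat.le_of_lt_succ i0.isLt, Fin.eta, hi0]⟩
    set r' := (((range (r+1)).filter (fun i => p' i ≠ 0))).max' hne with hr'
    have hr'mem := (((range (r+1)).filter (fun i => p' i ≠ 0))).max'_mem hne
    simp only [mem_filter, mem_range] at hr'mem
    refine ⟨r', p', hr'mem.2, fun n => ?_⟩
    have hsub : range (r' + 1) ⊆ range (r + 1) := by
      intro x hx; simp only [mem_range] at *; omega
    have hst : ∑ i ∈ range (r' + 1), (p' i).eval (n : K) * u (n + i)
        = ∑ i ∈ range (r + 1), (p' i).eval (n : K) * u (n + i) := by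
      apply Finset.sum_subset hsub
      intro x hx hx'
      simp only [mem_range] at hx
      have : p' x = 0 := by
        by_contra hc
        have : x ∈ ((range (r+1)).filter (fun i => p' i ≠ 0)) := by
          simp [mem_filter, mem_range, hx, hc]
        have := Finset.le_max' _ _ this
        simp only [mem_range] at hx'
        omega
      simp [this]
    rw [hst, ← Fin.sum_univ_eq_sum_range (fun i => (p' i).eval (n : K) * u (n + i)), ← hrec n]
    apply Finset.sum_congr rfl
    intro i _
    simp [hp', i.isLt, Nat.le_of_lt_succ i.isLt]
  · rintro ⟨r, p, hp, hrec⟩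
    exact isPRecursive_of u r p ⟨r, le_refl r, hp⟩ hrec

end Pieces

section Pieces2
open Polynomial Finset
set_option synthInstance.maxHeartbeats 1000000
set_option maxHeartbeats 2000000
variable {K : Type*} [Field K] [CharZero K]

private lemma reduce_shift {u : ℕ → K} {r : ℕ} {p : ℕ → K[X]} (hp : p r ≠ 0) (hrec : PolyRec u r p)
    (s : ℕ) : ∃ (b : K[X]) (a : ℕ → K[X]), b ≠ 0 ∧
      ∀ n : ℕ, b.eval (n : K) * u (n + s) = ∑ i ∈ range r, (a i).eval (n : K) * u (n + i) := by
  classical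
  rcases Nat.eq_zero_or_pos r with hr | hr
  · subst hr
    refine ⟨(p 0).comp (C 1 * X + C (s : K)), 0, PRec.comp_linear_ne_zero hp one_ne_zero, fun n => ?_⟩
    have h2 := hrec (n + s)
    simp only [zero_add, range_one, sum_singleton, Nat.add_zero] at h2
    rw [eval_comp]
    simp only [eval_add, eval_mul, eval_C, eval_X, one_mul, range_zero, sum_empty]
    rw [show (n : K) + (s : K) = ((n + s : ℕ) : K) by push_cast; ring]
    exact h2
  · obtain ⟨m, rfl⟩ : ∃ m, r = m + 1 := ⟨r - 1, by omega⟩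
    induction s with
    | zero =>
      refine ⟨1, fun i => if i = 0 then 1 else 0, one_ne_zero, fun n => ?_⟩
      rw [Finset.sum_eq_single 0]
      · simp
      · intro i _ hi; simp [hi]
      · intro h; simp at h
    | succ s' IH =>
      by_cases hs : s' + 1 < m + 1
      · refine ⟨1, fun i => if i = s' + 1 then 1 else 0, one_ne_zero, fun n => ?_⟩
        rw [Finset.sum_eq_single (s' + 1)]
        · simp
        · intro i _ hi; simp [hi]
        · intro h; simp only [mem_range] at h; omega
      · obtain ⟨b', a', hb', hid⟩ := IH
        refine ⟨p (m + 1) * (b'.comp (C 1 * X + C 1)),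
          fun i => (if i = 0 then 0 else p (m + 1) * ((a' (i - 1)).comp (C 1 * X + C 1)))
            - ((a' m).comp (C 1 * X + C 1)) * p i,
          mul_ne_zero hp (PRec.comp_linear_ne_zero hb' one_ne_zero), fun n => ?_⟩
        have ec : ∀ q : K[X], (q.comp (C 1 * X + C 1)).eval (n : K) = q.eval ((n + 1 : ℕ) : K) := by
          intro q; rw [eval_comp]; push_cast; simp
        have h1 := hid (n + 1)
        have h2 := hrec n
        rw [sum_range_succ] at h2
        -- h2 : ∑ i ∈ range (m+1), p i (n) u (n+i) + p (m+1) (n) * u (n + (m+1)) = 0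
        have hpr : (p (m + 1)).eval (n : K) * u (n + (m + 1))
            = - ∑ i ∈ range (m + 1), (p i).eval (n : K) * u (n + i) := by
          linear_combination h2
        calc (p (m + 1) * (b'.comp (C 1 * X + C 1))).eval (n : K) * u (n + (s' + 1))
            = (p (m + 1)).eval (n : K) * (b'.eval ((n + 1 : ℕ) : K) * u ((n + 1) + s')) := by
              rw [eval_mul, ec]
              rw [show (n + 1) + s' = n + (s' + 1) by omega]
              ring
          _ = (p (m + 1)).eval (n : K)
              * ∑ i ∈ range (m + 1), (a' i).eval ((n + 1 : ℕ) : K) * u ((n + 1) + i) := by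
              rw [h1]
          _ = (∑ i ∈ range m, (p (m + 1)).eval (n : K) * (a' i).eval ((n + 1 : ℕ) : K) * u (n + (i + 1)))
              + (a' m).eval ((n + 1 : ℕ) : K)
                * ((p (m + 1)).eval (n : K) * u (n + (m + 1))) := by
              rw [Finset.mul_sum, sum_range_succ]
              congr 1
              · apply Finset.sum_congr rfl
                intro i _
                rw [show (n + 1) + i = n + (i + 1) by omega]
                ring
              · rw [show (n + 1) + m = n + (m + 1) by omega]
                ring
          _ = (∑ i ∈ range m, (p (m + 1)).eval (n : K) * (a' i).eval ((n + 1 : ℕ) : K) * u (n + (i + 1)))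
              - (a' m).eval ((n + 1 : ℕ) : K)
                * ∑ i ∈ range (m + 1), (p i).eval (n : K) * u (n + i) := by
              rw [hpr]; ring
          _ = ∑ i ∈ range (m + 1),
                ((if i = 0 then 0 else p (m + 1) * ((a' (i - 1)).comp (C 1 * X + C 1)))
                  - ((a' m).comp (C 1 * X + C 1)) * p i).eval (n : K) * u (n + i) := by
              have e1 : ∀ i : ℕ,
                  ((if i = 0 then 0 else p (m + 1) * ((a' (i - 1)).comp (C 1 * X + C 1)))
                    - ((a' m).comp (C 1 * X + C 1)) * p i).eval (n : K)
                  = (if i = 0 then 0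
                      else (p (m + 1)).eval (n : K) * (a' (i - 1)).eval ((n + 1 : ℕ) : K))
                    - (a' m).eval ((n + 1 : ℕ) : K) * (p i).eval (n : K) := by
                intro i
                rw [eval_sub, eval_mul, ec, apply_ite (Polynomial.eval (n : K))]
                simp [ec, eval_mul]
              rw [eq_comm]
              simp only [e1, sub_mul]
              rw [Finset.sum_sub_distrib]
              congr 1
              · rw [Finset.sum_range_succ']
                simp [Nat.add_sub_cancel, mul_assoc]
              · rw [Finset.mul_sum]
                apply sum_congr rfl
                intro i _
                ring

private lemma exists_poly_relation {ι : Type*} [Fintype ι] {m : ℕ} (hcard : Fintype.card ι < m + 1)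
    (ψ : ℕ → ι → RatFunc K) :
    ∃ Q : ℕ → K[X], (∃ s, s ≤ m ∧ Q s ≠ 0) ∧
      ∀ d : ι, ∑ s ∈ range (m + 1), (algebraMap K[X] (RatFunc K) (Q s)) * ψ s d = 0 := by
  classical
  have hnli : ¬ LinearIndependent (RatFunc K) (fun s : Fin (m + 1) => ψ s) := by
    intro h
    have := h.fintype_card_le_finrank
    rw [Module.finrank_pi] at this
    simp only [Fintype.card_fin] at this
    omega
  obtain ⟨g, hg0, s0, hs0⟩ := Fintype.not_linearIndependent_iff.mp hnli
  obtain ⟨den, hden⟩ := IsLocalization.exist_integer_multiples_of_finite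
    (nonZeroDivisors K[X]) g
  choose q hq using hden
  refine ⟨fun s => if h : s < m + 1 then q ⟨s, h⟩ else 0, ⟨s0, by omega, ?_⟩, fun d => ?_⟩
  · simp only [s0.isLt, dif_pos, Fin.eta]
    intro h
    apply hs0
    have h2 := hq s0
    rw [h, map_zero] at h2
    have hd0 : algebraMap K[X] (RatFunc K) (den : K[X]) ≠ 0 := by
      intro hc
      exact nonZeroDivisors.coe_ne_zero den
        ((map_eq_zero_iff _ (IsFractionRing.injective K[X] (RatFunc K))).mp hc)
    simpa [Algebra.smul_def, hd0] using h2.symm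
  · rw [← Fin.sum_univ_eq_sum_range
      (fun s => (algebraMap K[X] (RatFunc K) (if h : s < m + 1 then q ⟨s, h⟩ else 0)) * ψ s d)]
    have : ∀ s : Fin (m + 1),
        (algebraMap K[X] (RatFunc K) (if h : (s : ℕ) < m + 1 then q ⟨s, h⟩ else 0)) * ψ s d
        = algebraMap K[X] (RatFunc K) (den : K[X]) * (g s * ψ s d) := by
      intro s
      simp only [s.isLt, dif_pos, Fin.eta, hq s]
      rw [Algebra.smul_def]; ring
    rw [Finset.sum_congr rfl (fun s _ => this s), ← Finset.mul_sum]
    have h3 : (∑ s : Fin (m + 1), g s • (fun s' : Fin (m+1) => ψ s' d) s) = 0 := by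
      have h4 : (∑ s : Fin (m + 1), g s • (fun s' : Fin (m+1) => ψ (s' : ℕ)) s) d = 0 := by
        rw [hg0]; rfl
      rw [← h4]
      simp [Finset.sum_apply]
    simp only [smul_eq_mul] at h3
    rw [h3, mul_zero]

private lemma combine {ι : Type*} [Fintype ι] {S : ℕ} {B : ℕ → K[X]} {A : ℕ → ι → K[X]}
    {w : ℕ → ℕ → K} {z : ι → ℕ → K}
    (hid : ∀ s ∈ range (S + 1), ∀ k : ℕ,
      (B s).eval (k : K) * w s k = ∑ d : ι, (A s d).eval (k : K) * z d k)
    {Q : ℕ → K[X]}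
    (hQ : ∀ d : ι, ∑ s ∈ range (S + 1), Q s * A s d * ∏ s' ∈ (range (S + 1)).erase s, B s' = 0) :
    ∀ k : ℕ, (∏ s ∈ range (S + 1), B s).eval (k : K)
      * ∑ s ∈ range (S + 1), (Q s).eval (k : K) * w s k = 0 := by
  intro k
  rw [Finset.mul_sum]
  have step : ∀ s ∈ range (S + 1),
      (∏ s' ∈ range (S + 1), B s').eval (k : K) * ((Q s).eval (k : K) * w s k)
      = ∑ d : ι, ((Q s).eval (k : K) * (∏ s' ∈ (range (S + 1)).erase s, B s').eval (k : K))
          * ((A s d).eval (k : K) * z d k) := by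
    intro s hs
    rw [← Finset.mul_prod_erase _ _ hs, eval_mul]
    have h1 := hid s hs k
    calc (B s).eval (k : K) * (∏ s' ∈ (range (S + 1)).erase s, B s').eval (k : K)
          * ((Q s).eval (k : K) * w s k)
        = ((Q s).eval (k : K) * (∏ s' ∈ (range (S + 1)).erase s, B s').eval (k : K))
          * ((B s).eval (k : K) * w s k) := by ring
      _ = ((Q s).eval (k : K) * (∏ s' ∈ (range (S + 1)).erase s, B s').eval (k : K))
          * ∑ d : ι, (A s d).eval (k : K) * z d k := by rw [h1]
      _ = ∑ d : ι, ((Q s).eval (k : K) * (∏ s' ∈ (range (S + 1)).erase s, B s').eval (k : K))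
          * ((A s d).eval (k : K) * z d k) := by rw [Finset.mul_sum]
  rw [Finset.sum_congr rfl step, Finset.sum_comm]
  apply Finset.sum_eq_zero
  intro d _
  have h2 := congrArg (Polynomial.eval (k : K)) (hQ d)
  rw [eval_finset_sum] at h2
  simp only [eval_mul, eval_zero] at h2
  calc ∑ s ∈ range (S + 1), ((Q s).eval (k : K)
          * (∏ s' ∈ (range (S + 1)).erase s, B s').eval (k : K))
        * ((A s d).eval (k : K) * z d k)
      = (∑ s ∈ range (S + 1), (Q s).eval (k : K) * (A s d).eval (k : K)
          * (∏ s' ∈ (range (S + 1)).erase s, B s').eval (k : K)) * z d k := by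
        rw [Finset.sum_mul]
        exact Finset.sum_congr rfl fun s _ => by ring
    _ = 0 := by rw [h2, zero_mul]

end Pieces2

section Forward
open Polynomial Finset
set_option synthInstance.maxHeartbeats 1000000
set_option maxHeartbeats 2000000
variable {K : Type*} [Field K] [CharZero K]

private lemma section_isPRecursive {u : ℕ → K} (hu : IsPRecursive u) {ℓ j : ℕ}
    (hℓ : 1 ≤ ℓ) (hj : j < ℓ) : IsPRecursive (fun k => u (ℓ * k + j)) := by
  classical
  obtain ⟨r, p, hp, hrec⟩ := (isPRecursive_iff' u).mp hu
  have hred := fun s => reduce_shift hp hrec s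
  choose b a hb hab using hred
  have hℓK : (ℓ : K) ≠ 0 := Nat.cast_ne_zero.mpr (by omega)
  set lin : K[X] := C (ℓ : K) * X + C 0 with hlin
  have ecomp : ∀ (q : K[X]) (k : ℕ), (q.comp lin).eval (k : K) = q.eval ((ℓ * k : ℕ) : K) := by
    intro q k
    rw [eval_comp]
    congr 1
    simp only [hlin, eval_add, eval_mul, eval_C, eval_X]
    push_cast
    ring
  set B : ℕ → K[X] := fun m => (b (ℓ * m + j)).comp lin with hB
  set A : ℕ → Fin r → K[X] := fun m i => (a (ℓ * m + j) i).comp lin with hA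
  set w : ℕ → ℕ → K := fun m k => u (ℓ * (k + m) + j) with hw
  set z : Fin r → ℕ → K := fun i k => u (ℓ * k + i) with hz
  have hid : ∀ m ∈ range (r + 1), ∀ k : ℕ,
      (B m).eval (k : K) * w m k = ∑ d : Fin r, (A m d).eval (k : K) * z d k := by
    intro m _ k
    have h1 := hab (ℓ * m + j) (ℓ * k)
    rw [show ℓ * k + (ℓ * m + j) = ℓ * (k + m) + j by ring] at h1
    simp only [hB, hA, hw, hz, ecomp]
    rw [h1, ← Fin.sum_univ_eq_sum_range (fun i => (a (ℓ * m + j) i).eval ((ℓ * k : ℕ) : K)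
      * u (ℓ * k + i))]
  obtain ⟨Q, ⟨s0, hs0le, hs0⟩, hrel⟩ := exists_poly_relation (K := K)
    (ι := Fin r) (m := r) (by simp) (fun s d => algebraMap K[X] (RatFunc K) (A s d)
      / algebraMap K[X] (RatFunc K) (B s))
  have hBne : ∀ m, B m ≠ 0 := fun m => PRec.comp_linear_ne_zero (hb _) hℓK
  have hQ : ∀ d : Fin r,
      ∑ s ∈ range (r + 1), Q s * A s d * ∏ s' ∈ (range (r + 1)).erase s, B s' = 0 := by
    intro d
    set φ := algebraMap K[X] (RatFunc K) with hφ
    have hinj := IsFractionRing.injective K[X] (RatFunc K)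
    apply hinj
    rw [map_zero, map_sum]
    have hterm : ∀ s ∈ range (r + 1), φ (Q s * A s d * ∏ s' ∈ (range (r + 1)).erase s, B s')
        = φ (∏ s' ∈ range (r + 1), B s') * (φ (Q s) * (φ (A s d) / φ (B s))) := by
      intro s hs
      rw [← Finset.mul_prod_erase _ _ hs]
      have hBs : φ (B s) ≠ 0 := fun hc => hBne s (hinj (by rw [hc, map_zero]))
      field_simp
      simp only [map_mul]
      ring
    rw [Finset.sum_congr rfl hterm, ← Finset.mul_sum, hrel d, mul_zero]
  have hcomb := combine hid hQ
  apply isPRecursive_of (fun k => u (ℓ * k + j)) r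
    (fun s => (∏ s' ∈ range (r + 1), B s') * Q s)
  · exact ⟨s0, hs0le, mul_ne_zero (Finset.prod_ne_zero_iff.mpr fun m _ => hBne m) hs0⟩
  · intro k
    have h2 := hcomb k
    rw [Finset.mul_sum] at h2
    rw [← h2]
    apply Finset.sum_congr rfl
    intro s _
    rw [eval_mul]
    show (∏ s' ∈ range (r + 1), B s').eval (k:K) * (Q s).eval (k:K) * u (ℓ * (k + s) + j)
      = (∏ s' ∈ range (r + 1), B s').eval (k:K) * ((Q s).eval (k:K) * w s k)
    rw [hw]
    ring

end Forward

section Reverse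
open Polynomial Finset
set_option synthInstance.maxHeartbeats 1000000
set_option maxHeartbeats 4000000
variable {K : Type*} [Field K] [CharZero K]

private lemma sum_fin_ite {R t : ℕ} (h : t ≤ R) (g : ℕ → K) :
    (∑ e : Fin R, if (e : ℕ) < t then g e else 0) = ∑ e ∈ range t, g e := by
  rw [Fin.sum_univ_eq_sum_range (fun e => if e < t then g e else 0)]
  have h1 : ∑ e ∈ range t, (if e < t then g e else 0) = ∑ e ∈ range R, (if e < t then g e else 0) :=
    Finset.sum_subset (Finset.range_subset_range.mpr h)
      (fun x _ hx' => if_neg (by simpa using hx'))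
  rw [← h1]
  exact Finset.sum_congr rfl fun e he => if_pos (mem_range.mp he)

private lemma lam_comp_mu {ℓ c : ℕ} (hℓ : 1 ≤ ℓ) :
    ((C ((ℓ:K)⁻¹) * X + C (-(c:K)/(ℓ:K))).comp (C (ℓ:K) * X + C (c:K))) = X := by
  have hℓK : (ℓ : K) ≠ 0 := Nat.cast_ne_zero.mpr (by omega)
  apply Polynomial.funext
  intro y
  rw [eval_comp]
  simp only [eval_add, eval_mul, eval_C, eval_X]
  field_simp
  ring

private lemma interleave_isPRecursive {u : ℕ → K} {ℓ : ℕ} (hℓ : 1 ≤ ℓ)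
    (hv : ∀ j < ℓ, IsPRecursive (fun k => u (ℓ * k + j))) : IsPRecursive u := by
  classical
  have hℓK : (ℓ : K) ≠ 0 := Nat.cast_ne_zero.mpr (by omega)
  -- extract normalized data for each section
  have H : ∀ j : ℕ, ∃ (r : ℕ) (bb : ℕ → K[X]) (aa : ℕ → ℕ → K[X]),
      (∀ t, bb t ≠ 0) ∧ (j < ℓ → ∀ t k : ℕ, (bb t).eval (k : K) * u (ℓ * (k + t) + j)
        = ∑ e ∈ range r, (aa t e).eval (k : K) * u (ℓ * (k + e) + j)) := by
    intro j
    by_cases hj : j < ℓ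
    · obtain ⟨r, p, hp, hrec⟩ := (isPRecursive_iff' _).mp (hv j hj)
      have hred := fun t => reduce_shift hp hrec t
      choose bb aa hbb haa using hred
      exact ⟨r, bb, aa, hbb, fun _ t k => haa t k⟩
    · exact ⟨0, fun _ => 1, fun _ _ => 0, fun _ => one_ne_zero, fun h => absurd h hj⟩
  choose r bb aa hbb haa using H
  set R := (range ℓ).sup r with hR
  set S := ℓ * (ℓ * R) with hS
  set jj : ℕ → ℕ → ℕ := fun c s => (c + s) % ℓ with hjj
  set mm : ℕ → ℕ → ℕ := fun c s => (c + s) / ℓ with hmm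
  have hjlt : ∀ c s, jj c s < ℓ := fun c s => Nat.mod_lt _ (by omega)
  have hrle : ∀ j, j < ℓ → r j ≤ R := fun j hj => Finset.le_sup (mem_range.mpr hj)
  set lam : ℕ → K[X] := fun c => C ((ℓ:K)⁻¹) * X + C (-(c:K)/(ℓ:K)) with hlam
  set mu : ℕ → K[X] := fun c => C (ℓ:K) * X + C (c:K) with hmu
  set Apad : ℕ → ℕ → (Fin ℓ × Fin R) → K[X] := fun c s d =>
    if (d.1 : ℕ) = jj c s ∧ (d.2 : ℕ) < r (jj c s) then aa (jj c s) (mm c s) d.2 else 0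
    with hApad
  set z : (Fin ℓ × Fin R) → ℕ → K := fun d k => u (ℓ * (k + (d.2 : ℕ)) + (d.1 : ℕ)) with hz
  -- padded identity
  have hid : ∀ c < ℓ, ∀ (s : ℕ), ∀ k : ℕ,
      (bb (jj c s) (mm c s)).eval (k : K) * u (ℓ * k + (c + s))
      = ∑ d : Fin ℓ × Fin R, (Apad c s d).eval (k : K) * z d k := by
    intro c hc s k
    have key := haa (jj c s) (hjlt c s) (mm c s) k
    have harg : ℓ * (k + mm c s) + jj c s = ℓ * k + (c + s) := by
      have := Nat.div_add_mod (c + s) ℓ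
      simp only [hjj, hmm]
      rw [Nat.mul_add]
      omega
    rw [harg] at key
    rw [key]
    rw [Fintype.sum_prod_type]
    rw [Finset.sum_eq_single (⟨jj c s, hjlt c s⟩ : Fin ℓ)]
    · have : ∀ e : Fin R, (Apad c s (⟨jj c s, hjlt c s⟩, e)).eval (k : K)
          * z (⟨jj c s, hjlt c s⟩, e) k
          = if (e : ℕ) < r (jj c s)
            then (aa (jj c s) (mm c s) e).eval (k : K) * u (ℓ * (k + (e:ℕ)) + jj c s) else 0 := by
        intro e
        by_cases he : (e : ℕ) < r (jj c s)
        · simp [hApad, hz, he]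
        · simp [hApad, hz, he]
      rw [Finset.sum_congr rfl fun e _ => this e]
      exact (sum_fin_ite (hrle _ (hjlt c s)) _).symm
    · intro j' _ hj'
      apply Finset.sum_eq_zero
      intro e _
      have : (j' : Fin ℓ) ≠ ⟨jj c s, hjlt c s⟩ := hj'
      have hne : (j' : ℕ) ≠ jj c s := fun hc2 => this (Fin.ext hc2)
      simp only [hApad]
      rw [if_neg (by tauto), eval_zero, zero_mul]
    · intro h
      exact absurd (Finset.mem_univ _) h
  -- linear algebra: find a dependence
  obtain ⟨Q, ⟨s0, hs0le, hs0⟩, hrel⟩ := exists_poly_relation (K := K)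
    (ι := Fin ℓ × (Fin ℓ × Fin R)) (m := S)
    (by simp only [Fintype.card_prod, Fintype.card_fin, hS]; omega)
    (fun s cd => algebraMap K[X] (RatFunc K) ((Apad (cd.1 : ℕ) s cd.2).comp (lam (cd.1 : ℕ)))
      / algebraMap K[X] (RatFunc K)
          ((bb (jj (cd.1 : ℕ) s) (mm (cd.1 : ℕ) s)).comp (lam (cd.1 : ℕ))))
  have hBcomp_ne : ∀ c s : ℕ, (bb (jj c s) (mm c s)).comp (lam c) ≠ 0 := fun c s =>
    PRec.comp_linear_ne_zero (hbb _ _) (inv_ne_zero hℓK)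
  -- per-class polynomial identity, in the "section variable"
  have hpoly : ∀ c < ℓ, ∀ d : Fin ℓ × Fin R,
      ∑ s ∈ range (S + 1), Q s * (Apad c s d).comp (lam c)
        * ∏ s' ∈ (range (S + 1)).erase s, (bb (jj c s') (mm c s')).comp (lam c) = 0 := by
    intro c hc d
    set φ := algebraMap K[X] (RatFunc K) with hφ
    have hinj := IsFractionRing.injective K[X] (RatFunc K)
    apply hinj
    rw [map_zero, map_sum]
    have hterm : ∀ s ∈ range (S + 1),
        φ (Q s * (Apad c s d).comp (lam c)
          * ∏ s' ∈ (range (S + 1)).erase s, (bb (jj c s') (mm c s')).comp (lam c))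
        = φ (∏ s' ∈ range (S + 1), (bb (jj c s') (mm c s')).comp (lam c))
          * (φ (Q s) * (φ ((Apad c s d).comp (lam c))
              / φ ((bb (jj c s) (mm c s)).comp (lam c)))) := by
      intro s hs
      rw [← Finset.mul_prod_erase _ _ hs]
      have hBs : φ ((bb (jj c s) (mm c s)).comp (lam c)) ≠ 0 :=
        fun hcc => hBcomp_ne c s (hinj (by rw [hcc, map_zero]))
      field_simp
      simp only [map_mul]
      ring
    rw [Finset.sum_congr rfl hterm, ← Finset.mul_sum]
    have := hrel (⟨⟨c, hc⟩, d⟩ : Fin ℓ × (Fin ℓ × Fin R))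
    simp only at this
    rw [this, mul_zero]
  -- compose with mu c to return to the original variable
  have hpoly2 : ∀ c < ℓ, ∀ d : Fin ℓ × Fin R,
      ∑ s ∈ range (S + 1), (Q s).comp (mu c) * Apad c s d
        * ∏ s' ∈ (range (S + 1)).erase s, bb (jj c s') (mm c s') = 0 := by
    intro c hc d
    have h1 := congrArg (Polynomial.aeval (mu c) : K[X] →ₐ[K] K[X]) (hpoly c hc d)
    rw [map_zero, map_sum] at h1
    rw [← h1]
    apply Finset.sum_congr rfl
    intro s _
    rw [map_mul, map_mul, map_prod]
    have hback : ∀ q : K[X], (Polynomial.aeval (mu c)) (q.comp (lam c)) = q := by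
      intro q
      rw [← comp_eq_aeval, Polynomial.comp_assoc]
      have : (lam c).comp (mu c) = X := by
        simp only [hlam, hmu]
        exact lam_comp_mu hℓ
      rw [this, Polynomial.comp_X]
    rw [hback, ← comp_eq_aeval]
    congr 1
    apply Finset.prod_congr rfl
    intro s' _
    exact (hback _).symm
  -- combine per class
  have hcomb : ∀ c < ℓ, ∀ k : ℕ,
      (∏ s ∈ range (S + 1), bb (jj c s) (mm c s)).eval (k : K)
        * ∑ s ∈ range (S + 1), ((Q s).comp (mu c)).eval (k : K) * u (ℓ * k + (c + s)) = 0 := by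
    intro c hc
    exact combine (ι := Fin ℓ × Fin R) (B := fun s => bb (jj c s) (mm c s))
      (A := fun s => Apad c s) (w := fun s k => u (ℓ * k + (c + s))) (z := z)
      (fun s _ k => hid c hc s k) (hpoly2 c hc)
  -- strip the nonvanishing prefactor, for large k
  have hclass : ∀ c : ℕ, ∃ Nc, c < ℓ → ∀ k ≥ Nc,
      ∑ s ∈ range (S + 1), (Q s).eval ((ℓ * k + c : ℕ) : K) * u ((ℓ * k + c) + s) = 0 := by
    intro c
    by_cases hc : c < ℓ
    · obtain ⟨Nc, hNc⟩ := PRec.eventually_eval_ne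
        (p := ∏ s ∈ range (S + 1), bb (jj c s) (mm c s))
        (Finset.prod_ne_zero_iff.mpr fun s _ => hbb _ _)
      refine ⟨Nc, fun _ k hk => ?_⟩
      have h4 := (mul_eq_zero.mp (hcomb c hc k)).resolve_left (hNc k hk)
      rw [← h4]
      apply Finset.sum_congr rfl
      intro s _
      have he : ((Q s).comp (mu c)).eval (k : K) = (Q s).eval ((ℓ * k + c : ℕ) : K) := by
        rw [eval_comp]
        congr 1
        simp only [hmu, eval_add, eval_mul, eval_C, eval_X]
        push_cast
        ring
      rw [he, show (ℓ * k + c) + s = ℓ * k + (c + s) by omega]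
    · exact ⟨0, fun h => absurd h hc⟩
  choose N hN using hclass
  set M := (range ℓ).sup N with hM
  have hall : ∀ n, n ≥ ℓ * M + ℓ → ∑ s ∈ range (S + 1), (Q s).eval (n : K) * u (n + s) = 0 := by
    intro n hn
    have hc : n % ℓ < ℓ := Nat.mod_lt _ (by omega)
    have hmle : N (n % ℓ) ≤ M := Finset.le_sup (mem_range.mpr hc)
    have h5 : ℓ * (n / ℓ) + n % ℓ = n := Nat.div_add_mod n ℓ
    have hk : n / ℓ ≥ N (n % ℓ) := by
      by_contra hcon
      push_neg at hcon
      have e2 : ℓ * (n / ℓ + 1) ≤ ℓ * M := Nat.mul_le_mul_left ℓ (by omega)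
      rw [Nat.mul_add, Nat.mul_one] at e2
      omega
    have h6 := hN (n % ℓ) hc (n / ℓ) hk
    rw [h5] at h6
    exact h6
  -- multiply by a vanishing polynomial to cover small n
  set NN := ℓ * M + ℓ with hNN
  set V : K[X] := ∏ t ∈ range NN, (X - C (t : K)) with hV
  have hVne : V ≠ 0 := Finset.prod_ne_zero_iff.mpr fun t _ => X_sub_C_ne_zero _
  have hV0 : ∀ n : ℕ, n < NN → V.eval (n : K) = 0 := by
    intro n hn
    rw [hV, eval_prod]
    apply Finset.prod_eq_zero (Finset.mem_range.mpr hn)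
    simp
  apply isPRecursive_of u S (fun s => V * Q s)
  · exact ⟨s0, hs0le, mul_ne_zero hVne hs0⟩
  · intro n
    have hsplit : ∑ s ∈ range (S + 1), (V * Q s).eval (n : K) * u (n + s)
        = V.eval (n : K) * ∑ s ∈ range (S + 1), (Q s).eval (n : K) * u (n + s) := by
      rw [Finset.mul_sum]
      apply Finset.sum_congr rfl
      intro s _
      rw [eval_mul]
      ring
    rw [hsplit]
    by_cases hn : n ≥ NN
    · rw [hall n hn, mul_zero]
    · rw [hV0 n (by omega), zero_mul]

end Reverse

/-- **Lemma (sections of P-recursive sequences).**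
For `ℓ ≥ 1`, a sequence `u` is P-recursive if and only if each of its `ℓ` sections
`k ↦ u(ℓk + j)`, `0 ≤ j < ℓ`, is P-recursive. -/
theorem isPRecursive_iff_sections {K : Type*} [Field K] [CharZero K]
    (ℓ : ℕ) (hℓ : 1 ≤ ℓ) (u : ℕ → K) :
    IsPRecursive u ↔ ∀ j < ℓ, IsPRecursive (fun k => u (ℓ * k + j)) := by
  constructor
  · intro hu j hj
    exact section_isPRecursive hu hℓ hj
  · intro hv
    exact interleave_isPRecursive hℓ hv
end

section
/- Let K be a field. Let A = Σ_{i=0}^{M} a_i(x)·Sⁱ and C = Σ_{j=0}^{m} c_j(x)·Sʲ be linear recurrence operators with polynomial coefficients a_i, c_j ∈ K[x] and c_m ≠ 0, with m ≤ M, and let B = Σ_{t=0}^{M−m} b_t(x)·Sᵗ be a recurrence operator with rational function coefficients b_t ∈ K(x) such that A = B·C, where multiplication of operators obeys the commutation rule S·r(x) = r(x+1)·S, equivalently a_i(x) = Σ_t b_t(x)·c_{i−t}(x+t) for all i. Then every element α of K that is a root of the denominator of some b_t satisfies c_m(α + s) = 0 for some s ∈ {0, 1, …, M−m}. -/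
/-- **Lemma (denominators of a left cofactor of recurrence operators).**
Let `A = ∑ a_i(x)·Sⁱ` and `C = ∑ c_j(x)·Sʲ` be linear recurrence operators with
polynomial coefficients, `c_m ≠ 0`, `m ≤ M`, and let `B = ∑ b_t(x)·Sᵗ` have rational
function coefficients with `A = B·C`, i.e. `a_i(x) = ∑_t b_t(x)·c_{i−t}(x+t)` for all
`i` (operator composition obeying `S·r(x) = r(x+1)·S`).  Then every root `α` of the
denominator of some `b_t` satisfies `c_m(α + s) = 0` for some `0 ≤ s ≤ M − m`. -/
theorem denom_roots_of_factor {K : Type*} [Field K]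
    (M m : ℕ) (hm : m ≤ M)
    (a c : ℕ → Polynomial K) (b : ℕ → RatFunc K)
    (haM : ∀ i, M < i → a i = 0)
    (hcm : ∀ j, m < j → c j = 0)
    (hcm0 : c m ≠ 0)
    (hbM : ∀ t, M - m < t → b t = 0)
    (hfact : ∀ i : ℕ,
      algebraMap (Polynomial K) (RatFunc K) (a i) =
        ∑ t ∈ Finset.range (M - m + 1),
          if t ≤ i then
            b t * algebraMap (Polynomial K) (RatFunc K)
              ((c (i - t)).comp (Polynomial.X + (t : Polynomial K)))
          else 0) :
    ∀ α : K, (∃ t, t ≤ M - m ∧ Polynomial.eval α ((b t).denom) = 0) →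
      ∃ s, s ≤ M - m ∧ Polynomial.eval (α + (s : K)) (c m) = 0 := by
  intro α ⟨t0, ht0, hden⟩
  by_contra hcon
  push_neg at hcon
  set N := M - m with hN
  -- basic closure properties of "denominator does not vanish at α"
  have Pdvd : ∀ (f : RatFunc K) (q : Polynomial K), f.denom ∣ q →
      Polynomial.eval α q ≠ 0 → Polynomial.eval α f.denom ≠ 0 := by
    rintro f q ⟨e, rfl⟩ h
    rw [Polynomial.eval_mul] at h
    exact fun h0 => h (by rw [h0, zero_mul])
  have Pmap : ∀ p : Polynomial K,
      Polynomial.eval α (algebraMap (Polynomial K) (RatFunc K) p).denom ≠ 0 := by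
    intro p; rw [RatFunc.denom_algebraMap]; simp
  have Padd : ∀ f g : RatFunc K, Polynomial.eval α f.denom ≠ 0 →
      Polynomial.eval α g.denom ≠ 0 → Polynomial.eval α (f + g).denom ≠ 0 := by
    intro f g hf hg
    exact Pdvd _ _ (RatFunc.denom_add_dvd f g)
      (by rw [Polynomial.eval_mul]; exact mul_ne_zero hf hg)
  have Pmul : ∀ f g : RatFunc K, Polynomial.eval α f.denom ≠ 0 →
      Polynomial.eval α g.denom ≠ 0 → Polynomial.eval α (f * g).denom ≠ 0 := by
    intro f g hf hg
    exact Pdvd _ _ (RatFunc.denom_mul_dvd f g)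
      (by rw [Polynomial.eval_mul]; exact mul_ne_zero hf hg)
  have Pneg : ∀ f : RatFunc K, Polynomial.eval α f.denom ≠ 0 →
      Polynomial.eval α (-f).denom ≠ 0 := by
    intro f hf
    have : -f = algebraMap (Polynomial K) (RatFunc K) (-1) * f := by
      rw [map_neg, map_one, neg_one_mul]
    rw [this]; exact Pmul _ _ (Pmap _) hf
  have Psum : ∀ (s : Finset ℕ) (F : ℕ → RatFunc K),
      (∀ x ∈ s, Polynomial.eval α (F x).denom ≠ 0) →
      Polynomial.eval α (∑ x ∈ s, F x).denom ≠ 0 := by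
    intro s F hF
    refine Finset.sum_induction F (fun f => Polynomial.eval α f.denom ≠ 0)
      (fun f g => Padd f g) ?_ hF
    simp [RatFunc.denom_zero]
  -- division step
  have Pdiv : ∀ (f g : RatFunc K) (D : Polynomial K),
      f * algebraMap (Polynomial K) (RatFunc K) D = g →
      Polynomial.eval α D ≠ 0 → Polynomial.eval α g.denom ≠ 0 →
      Polynomial.eval α f.denom ≠ 0 := by
    intro f g D hfg hDe hg
    have hD : D ≠ 0 := fun h => hDe (by rw [h, Polynomial.eval_zero])
    have hD' : algebraMap (Polynomial K) (RatFunc K) D ≠ 0 :=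
      RatFunc.algebraMap_ne_zero hD
    have hf : f = algebraMap (Polynomial K) (RatFunc K) g.num /
        algebraMap (Polynomial K) (RatFunc K) (g.denom * D) := by
      rw [map_mul, ← div_div, RatFunc.num_div_denom, eq_div_iff hD', hfg]
    have hdvd := RatFunc.denom_div_dvd g.num (g.denom * D)
    rw [← hf] at hdvd
    exact Pdvd f _ hdvd
      (by rw [Polynomial.eval_mul]; exact mul_ne_zero hg hDe)
  -- main downward induction
  have main : ∀ t, t ≤ N →
      (∀ t', t < t' → t' ≤ N → Polynomial.eval α (b t').denom ≠ 0) →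
      Polynomial.eval α (b t).denom ≠ 0 := by
    intro t ht ih
    have hsum := hfact (m + t)
    have htmem : t ∈ Finset.range (N + 1) := Finset.mem_range.mpr (by omega)
    rw [← Finset.sum_erase_add _ _ htmem] at hsum
    set D : Polynomial K := (c m).comp (Polynomial.X + (t : Polynomial K)) with hD
    have hft : (if t ≤ m + t then b t * algebraMap (Polynomial K) (RatFunc K)
        ((c (m + t - t)).comp (Polynomial.X + (t : Polynomial K))) else 0)
        = b t * algebraMap (Polynomial K) (RatFunc K) D := by
      rw [if_pos (Nat.le_add_left t m), Nat.add_sub_cancel]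
    rw [hft] at hsum
    have hDe : Polynomial.eval α D ≠ 0 := by
      have : Polynomial.eval α D = Polynomial.eval (α + (t : K)) (c m) := by
        simp [hD, Polynomial.eval_comp]
      rw [this]; exact hcon t ht
    have hR : Polynomial.eval α
        (∑ t' ∈ (Finset.range (N + 1)).erase t,
          if t' ≤ m + t then b t' * algebraMap (Polynomial K) (RatFunc K)
            ((c (m + t - t')).comp (Polynomial.X + (t' : Polynomial K))) else 0).denom
        ≠ 0 := by
      refine Psum _ _ ?_
      intro t' ht'
      rw [Finset.mem_erase, Finset.mem_range] at ht'
      obtain ⟨hne, hlt⟩ := ht'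
      by_cases hle : t' ≤ m + t
      · rw [if_pos hle]
        rcases lt_or_gt_of_ne hne with h1 | h1
        · have hc0 : c (m + t - t') = 0 := hcm _ (by omega)
          rw [hc0, Polynomial.zero_comp, map_zero, mul_zero, RatFunc.denom_zero]
          simp
        · exact Pmul _ _ (ih t' h1 (by omega)) (Pmap _)
      · rw [if_neg hle, RatFunc.denom_zero]; simp
    have heq : b t * algebraMap (Polynomial K) (RatFunc K) D =
        algebraMap (Polynomial K) (RatFunc K) (a (m + t)) +
        -(∑ t' ∈ (Finset.range (N + 1)).erase t,
          if t' ≤ m + t then b t' * algebraMap (Polynomial K) (RatFunc K)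
            ((c (m + t - t')).comp (Polynomial.X + (t' : Polynomial K))) else 0) := by
      rw [hsum]; ring
    exact Pdiv _ _ D heq hDe (Padd _ _ (Pmap _) (Pneg _ hR))
  have key : ∀ k t, t ≤ N → N - t ≤ k → Polynomial.eval α (b t).denom ≠ 0 := by
    intro k
    induction k with
    | zero =>
      intro t ht hk
      exact main t ht (fun t' h1 h2 => absurd rfl (by omega : t' ≠ t'))
    | succ k ihk =>
      intro t ht hk
      exact main t ht (fun t' h1 h2 => ihk t' h2 (by omega))
  exact key N t0 ht0 (by omega) hden
end

section
/- Define polynomials a_n ∈ ℚ[z] by a_1 = z and a_n = −z²/((2n−3)(2n−1)) for n ≥ 2, and define (P_n) and (Q_n) by P_{−1} = 1, P_0 = 0, Q_{−1} = 0, Q_0 = 1 and, for n ≥ 1, P_n = P_{n−1} + a_n·P_{n−2}, Q_n = Q_{n−1} + a_n·Q_{n−2}. Let H_n := P_n'·Q_n − Q_n² − P_n² − P_n·Q_n', where ' denotes the derivative of polynomials. Then for all n ≥ 0: (2n+1)²·H_{n+1} = z²·H_n. -/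
open Polynomial

/-- The partial numerators of the continued fraction of `tan`:
`a₁ = z` and `a_n = −z²/((2n−3)(2n−1))` for `n ≥ 2`. -/
noncomputable def tanA (n : ℤ) : Polynomial ℚ :=
  if n = 1 then X
  else C (-(1 : ℚ) / ((2 * (n : ℚ) - 3) * (2 * (n : ℚ) - 1))) * X ^ 2

/-- Auxiliary: the "determinant" `P_{n-1} Q_n − P_n Q_{n-1}`. -/
noncomputable def Dp (P Q : ℤ → Polynomial ℚ) (n : ℤ) : Polynomial ℚ :=
  P (n - 1) * Q n - P n * Q (n - 1)

/-- Auxiliary: the mixed bilinear expression. -/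
noncomputable def Kp (P Q : ℤ → Polynomial ℚ) (n : ℤ) : Polynomial ℚ :=
  derivative (P n) * Q (n - 1) + derivative (P (n - 1)) * Q n
    - P n * derivative (Q (n - 1)) - P (n - 1) * derivative (Q n)
    - 2 * Q n * Q (n - 1) - 2 * P n * P (n - 1)

/-- Auxiliary scalar sequence: `fc m = −1/(1·3·⋯·(2m−1))²`. -/
noncomputable def fc : ℕ → ℚ
  | 0 => -1
  | m + 1 => fc m / (2 * (m : ℚ) + 1) ^ 2

/-- Auxiliary scalar sequence for the determinant coefficients. -/
noncomputable def gc : ℕ → ℚ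
  | 0 => -1
  | m + 1 => gc m / ((2 * (m : ℚ) + 1) * (2 * (m : ℚ) + 3))

lemma two_m1_ne (m : ℕ) : (2 * (m : ℚ) + 1) ≠ 0 := by positivity
lemma two_m3_ne (m : ℕ) : (2 * (m : ℚ) + 3) ≠ 0 := by positivity

lemma gc_fc (m : ℕ) : gc m * (2 * (m : ℚ) + 1) = fc m := by
  induction m with
  | zero => simp [gc, fc]
  | succ m ih =>
      rw [gc, fc, ← ih]
      have h1 := two_m1_ne m
      have h3 := two_m3_ne m
      push_cast
      field_simp
      ring

lemma tanA_cast (m : ℕ) :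
    tanA ((m : ℤ) + 2) = C (-1 / ((2 * (m : ℚ) + 1) * (2 * (m : ℚ) + 3))) * X ^ 2 := by
  rw [tanA, if_neg (by omega)]
  congr 1
  push_cast
  ring_nf

/-- **The first-order recurrence for the remainders of the continued fraction of
`tan`.**  With `P_n/Q_n` the convergents of the continued fraction with partial
numerators `tanA` and `H_n := P_n'·Q_n − Q_n² − P_n² − P_n·Q_n'`, one has
`(2n+1)²·H_{n+1} = z²·H_n` for all `n ≥ 0`. -/
theorem tan_remainder_recurrence
    (P Q : ℤ → Polynomial ℚ)
    (hPinit : P (-1) = 1 ∧ P 0 = 0) (hQinit : Q (-1) = 0 ∧ Q 0 = 1)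
    (hPrec : ∀ n : ℤ, 1 ≤ n → P n = P (n - 1) + tanA n * P (n - 2))
    (hQrec : ∀ n : ℤ, 1 ≤ n → Q n = Q (n - 1) + tanA n * Q (n - 2))
    (H : ℤ → Polynomial ℚ)
    (hH : ∀ n : ℤ, H n = derivative (P n) * Q n - Q n ^ 2 - P n ^ 2 - P n * derivative (Q n)) :
    ∀ n : ℤ, 0 ≤ n →
      C ((2 * (n : ℚ) + 1) ^ 2) * H (n + 1) = X ^ 2 * H n := by
  obtain ⟨hPm1, hP0⟩ := hPinit
  obtain ⟨hQm1, hQ0⟩ := hQinit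
  -- derived recurrences
  have hDrec : ∀ n : ℤ, 1 ≤ n → Dp P Q n = -(tanA n) * Dp P Q (n - 1) := by
    intro n hn
    unfold Dp
    rw [hPrec n hn, hQrec n hn, show n - 1 - 1 = n - 2 from by ring]
    ring
  have hKrec : ∀ n : ℤ, 1 ≤ n →
      Kp P Q n = 2 * H (n - 1) + tanA n * Kp P Q (n - 1)
        + derivative (tanA n) * Dp P Q (n - 1) := by
    intro n hn
    rw [hH (n - 1)]
    unfold Kp Dp
    rw [hPrec n hn, hQrec n hn, show n - 1 - 1 = n - 2 from by ring]
    simp only [derivative_add, derivative_mul]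
    ring
  have hHrec : ∀ n : ℤ, 1 ≤ n →
      H n = H (n - 1) + tanA n ^ 2 * H (n - 2) + tanA n * Kp P Q (n - 1)
        + derivative (tanA n) * Dp P Q (n - 1) := by
    intro n hn
    rw [hH n, hH (n - 1), hH (n - 2)]
    unfold Kp Dp
    rw [hPrec n hn, hQrec n hn, show n - 1 - 1 = n - 2 from by ring]
    simp only [derivative_add, derivative_mul]
    ring
  -- base values
  have htanA1 : tanA 1 = X := by simp [tanA]
  have hP1 : P 1 = X := by
    rw [hPrec 1 le_rfl, htanA1]
    norm_num [hP0, hPm1]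
  have hQ1 : Q 1 = 1 := by
    rw [hQrec 1 le_rfl, htanA1]
    norm_num [hQ0, hQm1]
  -- the main induction
  have key : ∀ m : ℕ,
      H (m : ℤ) = C (fc m) * X ^ (2 * m)
      ∧ H ((m : ℤ) + 1) = C (fc (m + 1)) * X ^ (2 * m + 2)
      ∧ Dp P Q ((m : ℤ) + 1) = C (gc m) * X ^ (2 * m + 1)
      ∧ Kp P Q ((m : ℤ) + 1) = C (fc m) * X ^ (2 * m) := by
    intro m
    induction m with
    | zero =>
        refine ⟨?_, ?_, ?_, ?_⟩
        · rw [Nat.cast_zero, hH 0, hP0, hQ0]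
          simp [fc]
        · have hfc1 : fc 1 = -1 := by norm_num [fc]
          rw [Nat.cast_zero, zero_add, hH 1, hP1, hQ1, hfc1]
          simp
        · rw [Nat.cast_zero, zero_add]
          unfold Dp
          norm_num [hP0, hP1, hQ0, hQ1]
          simp [gc]
        · rw [Nat.cast_zero, zero_add]
          unfold Kp
          norm_num [hP0, hP1, hQ0, hQ1, hPm1, hQm1]
          simp [fc]
    | succ m ih =>
        obtain ⟨ih1, ih2, ih3, ih4⟩ := ih
        have h1 := two_m1_ne m
        have h3 := two_m3_ne m
        have ha := tanA_cast m
        have hda : derivative (tanA ((m : ℤ) + 2))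
            = C (2 * (-1 / ((2 * (m : ℚ) + 1) * (2 * (m : ℚ) + 3)))) * X := by
          rw [ha, derivative_C_mul, derivative_X_pow]
          simp [map_mul]
          ring
        -- scalar identities
        have sA : fc (m + 1)
            = -((-1 / ((2 * (m : ℚ) + 1) * (2 * (m : ℚ) + 3))) * fc m)
              - 2 * (-1 / ((2 * (m : ℚ) + 1) * (2 * (m : ℚ) + 3))) * gc m := by
          have hgf := gc_fc m
          rw [fc, ← hgf]
          field_simp
          ring
        have sB : fc (m + 2)
            = (-1 / ((2 * (m : ℚ) + 1) * (2 * (m : ℚ) + 3))) ^ 2 * fc m := by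
          rw [show m + 2 = (m + 1) + 1 from rfl, fc, fc]
          push_cast
          field_simp
          ring
        have sC : gc (m + 1)
            = -((-1 / ((2 * (m : ℚ) + 1) * (2 * (m : ℚ) + 3))) * gc m) := by
          rw [gc]
          field_simp
        set e : ℚ := -1 / ((2 * (m : ℚ) + 1) * (2 * (m : ℚ) + 3)) with he
        refine ⟨?_, ?_, ?_, ?_⟩
        · push_cast
          rw [show 2 * (m + 1) = 2 * m + 2 from by ring]
          exact ih2
        · push_cast
          have hrec := hHrec ((m : ℤ) + 2) (by omega)
          rw [show (m : ℤ) + 2 - 1 = (m : ℤ) + 1 from by ring,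
            show (m : ℤ) + 2 - 2 = (m : ℤ) from by ring] at hrec
          rw [hda, ha] at hrec
          rw [show (m : ℤ) + 1 + 1 = (m : ℤ) + 2 from by ring, hrec,
            ih1, ih2, ih3, ih4, sB, sA]
          simp only [map_mul, map_neg, map_add, map_sub, map_pow, map_ofNat]
          ring
        · push_cast
          have hrec := hDrec ((m : ℤ) + 2) (by omega)
          rw [show (m : ℤ) + 2 - 1 = (m : ℤ) + 1 from by ring] at hrec
          rw [ha] at hrec
          rw [show (m : ℤ) + 1 + 1 = (m : ℤ) + 2 from by ring, hrec, ih3, sC]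
          simp only [map_mul, map_neg, map_add, map_sub, map_pow, map_ofNat]
          ring
        · push_cast
          have hrec := hKrec ((m : ℤ) + 2) (by omega)
          rw [show (m : ℤ) + 2 - 1 = (m : ℤ) + 1 from by ring] at hrec
          rw [hda, ha] at hrec
          rw [show (m : ℤ) + 1 + 1 = (m : ℤ) + 2 from by ring, hrec,
            ih2, ih3, ih4, sA]
          simp only [map_mul, map_neg, map_add, map_sub, map_pow, map_ofNat]
          ring
  -- conclude
  intro n hn
  lift n to ℕ using hn with m
  obtain ⟨h1, h2, -, -⟩ := key m
  have sG : (2 * (m : ℚ) + 1) ^ 2 * fc (m + 1) = fc m := by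
    rw [fc]
    field_simp
  rw [h1, h2, show (((m : ℤ) : ℚ)) = (m : ℚ) from by push_cast; ring, ← sG]
  simp only [map_mul, map_pow, map_add, map_ofNat, map_one]
  ring
end

section
/- Define polynomials a_n ∈ ℚ[z] by a_1 = z, a_{2k} = −z/(2(2k−1)) for k ≥ 1, and a_{2k+1} = z/(2(2k+1)) for k ≥ 1, and define (P_n) and (Q_n) by P_{−1} = 1, P_0 = 0, Q_{−1} = 0, Q_0 = 1 and, for n ≥ 1, P_n = P_{n−1} + a_n·P_{n−2}, Q_n = Q_{n−1} + a_n·Q_{n−2}. Then for all k ≥ 1: P_{2k+2} = P_{2k} + (z²/(4(4k²−1)))·P_{2k−2}, and the same recurrence holds for Q: Q_{2k+2} = Q_{2k} + (z²/(4(4k²−1)))·Q_{2k−2}. -/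
open Polynomial

/-- The partial numerators of the continued fraction of `exp`:
`a₁ = z`, `a_{2k} = −z/(2(2k−1))` and `a_{2k+1} = z/(2(2k+1))` for `k ≥ 1`
(so, for `n ≥ 2`, `a_n = −z/(2(n−1))` if `n` is even and `a_n = z/(2n)` if `n` is odd). -/
noncomputable def expA (n : ℤ) : Polynomial ℚ :=
  if n = 1 then X
  else if Even n then C (-(1 : ℚ) / (2 * ((n : ℚ) - 1))) * X
  else C ((1 : ℚ) / (2 * (n : ℚ))) * X

lemma exp_even_aux (R : ℤ → Polynomial ℚ)
    (hrec : ∀ n : ℤ, 1 ≤ n → R n = R (n - 1) + expA n * R (n - 2))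
    (k : ℤ) (hk : 1 ≤ k) :
    R (2 * k + 2) = R (2 * k) +
      C ((1 : ℚ) / (4 * (4 * (k : ℚ) ^ 2 - 1))) * X ^ 2 * R (2 * k - 2) := by
  have hkq : (1 : ℚ) ≤ (k : ℚ) := by exact_mod_cast hk
  have hne1 : (2 * (k : ℚ) + 1) ≠ 0 := by nlinarith
  have hne2 : (2 * (k : ℚ) - 1) ≠ 0 := by nlinarith
  have h1 := hrec (2 * k + 2) (by linarith)
  have h2 := hrec (2 * k + 1) (by linarith)
  have h3 := hrec (2 * k) (by linarith)
  rw [show (2*k+2-1 : ℤ) = 2*k+1 by ring, show (2*k+2-2 : ℤ) = 2*k by ring] at h1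
  rw [show (2*k+1-1 : ℤ) = 2*k by ring, show (2*k+1-2 : ℤ) = 2*k-1 by ring] at h2
  rw [show (2*k-1 : ℤ) = 2*k-1 by ring, show (2*k-2 : ℤ) = 2*k-2 by ring] at h3
  have e1 : expA (2*k+2) = C (-(1:ℚ) / (2 * (2*(k:ℚ)+1))) * X := by
    rw [expA, if_neg (by omega), if_pos ⟨k+1, by ring⟩]
    congr 2
    push_cast
    ring
  have e2 : expA (2*k+1) = C ((1:ℚ) / (2 * (2*(k:ℚ)+1))) * X := by
    rw [expA, if_neg (by omega), if_neg (by rw [Int.even_iff]; omega)]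
    congr 2
    push_cast
    ring
  have e3 : expA (2*k) = C (-(1:ℚ) / (2 * (2*(k:ℚ)-1))) * X := by
    rw [expA, if_neg (by omega), if_pos ⟨k, by ring⟩]
    congr 2
    push_cast
    ring
  rw [e1] at h1; rw [e2] at h2; rw [e3] at h3
  have hA : (C (-(1:ℚ) / (2 * (2*(k:ℚ)+1))) : Polynomial ℚ)
      = - C ((1:ℚ) / (2 * (2*(k:ℚ)+1))) := by
    rw [← C_neg]; congr 1; ring
  have hB : (C ((1:ℚ) / (2 * (2*(k:ℚ)+1))) : Polynomial ℚ)
        * C (-(1:ℚ) / (2 * (2*(k:ℚ)-1)))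
      = - C ((1 : ℚ) / (4 * (4 * (k : ℚ) ^ 2 - 1))) := by
    rw [← C_mul, ← C_neg]; congr 1
    have h4 : (4 * (4 * (k : ℚ) ^ 2 - 1)) ≠ 0 := by nlinarith
    rw [show (4 * (4 * (k : ℚ) ^ 2 - 1)) = (2 * (2*(k:ℚ)+1)) * (2 * (2*(k:ℚ)-1)) by ring]
    rw [div_mul_div_comm, one_mul, neg_div]
  linear_combination h1 + h2 - C ((1:ℚ) / (2 * (2*(k:ℚ)+1))) * X * h3
    + X * R (2*k) * hA - X^2 * R (2*k-2) * hB

/-- **Recurrence for the even-indexed convergents of the continued fraction of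
`exp`.**  For all `k ≥ 1`,
`P_{2k+2} = P_{2k} + (z²/(4(4k²−1)))·P_{2k−2}` and likewise for `Q`. -/
theorem exp_even_convergents_recurrence
    (P Q : ℤ → Polynomial ℚ)
    (hPinit : P (-1) = 1 ∧ P 0 = 0) (hQinit : Q (-1) = 0 ∧ Q 0 = 1)
    (hPrec : ∀ n : ℤ, 1 ≤ n → P n = P (n - 1) + expA n * P (n - 2))
    (hQrec : ∀ n : ℤ, 1 ≤ n → Q n = Q (n - 1) + expA n * Q (n - 2)) :
    ∀ k : ℤ, 1 ≤ k →
      P (2 * k + 2) = P (2 * k) +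
          C ((1 : ℚ) / (4 * (4 * (k : ℚ) ^ 2 - 1))) * X ^ 2 * P (2 * k - 2) ∧
      Q (2 * k + 2) = Q (2 * k) +
          C ((1 : ℚ) / (4 * (4 * (k : ℚ) ^ 2 - 1))) * X ^ 2 * Q (2 * k - 2) := by
  intro k hk
  exact ⟨exp_even_aux P hPrec k hk, exp_even_aux Q hQrec k hk⟩
end

section
/- Define polynomials a_n ∈ ℚ[z] by a_1 = z, a_{2k} = −z/(2(2k−1)) for k ≥ 1, and a_{2k+1} = z/(2(2k+1)) for k ≥ 1, and define (P_n) and (Q_n) by P_{−1} = 1, P_0 = 0, Q_{−1} = 0, Q_0 = 1 and, for n ≥ 1, P_n = P_{n−1} + a_n·P_{n−2}, Q_n = Q_{n−1} + a_n·Q_{n−2}. Let H_{2k} := P_{2k}'·Q_{2k} − P_{2k}·Q_{2k}' − P_{2k}·Q_{2k} − Q_{2k}², where ' denotes the derivative of polynomials. Then for all k ≥ 0: H_{2k+2} = −(z²/(4(2k+1)²))·H_{2k}. -/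
open Polynomial

/-- `D_n = P_n'Q_n − P_nQ_n' − P_nQ_n − Q_n²`. -/
noncomputable def DD (P Q : ℤ → Polynomial ℚ) (n : ℤ) : Polynomial ℚ :=
  derivative (P n) * Q n - P n * derivative (Q n) - P n * Q n - Q n ^ 2

/-- mixed version of `DD` between levels `n` and `n-1`. -/
noncomputable def KK (P Q : ℤ → Polynomial ℚ) (n : ℤ) : Polynomial ℚ :=
  derivative (P n) * Q (n - 1) - P n * derivative (Q (n - 1))
    + derivative (P (n - 1)) * Q n - P (n - 1) * derivative (Q n)
    - P n * Q (n - 1) - P (n - 1) * Q n - 2 * (Q n * Q (n - 1))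

/-- Wronskian `W_n = P_nQ_{n-1} − P_{n-1}Q_n`. -/
noncomputable def WW (P Q : ℤ → Polynomial ℚ) (n : ℤ) : Polynomial ℚ :=
  P n * Q (n - 1) - P (n - 1) * Q n

lemma Dstep (P Q : ℤ → Polynomial ℚ) (n : ℤ) (c : ℚ)
    (hp : P n = P (n - 1) + C c * X * P (n - 2))
    (hq : Q n = Q (n - 1) + C c * X * Q (n - 2)) :
    DD P Q n = DD P Q (n - 1) + (C c * X) ^ 2 * DD P Q (n - 2)
      + C c * X * KK P Q (n - 1) - C c * WW P Q (n - 1) := by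
  have e : n - 1 - 1 = n - 2 := by ring
  simp only [DD, KK, WW, e, hp, hq, derivative_add, derivative_mul, derivative_C,
    derivative_X, zero_mul, mul_one, zero_add, one_mul]
  ring

lemma Kstep (P Q : ℤ → Polynomial ℚ) (n : ℤ) (c : ℚ)
    (hp : P n = P (n - 1) + C c * X * P (n - 2))
    (hq : Q n = Q (n - 1) + C c * X * Q (n - 2)) :
    KK P Q n = 2 * DD P Q (n - 1) + C c * X * KK P Q (n - 1) - C c * WW P Q (n - 1) := by
  have e : n - 1 - 1 = n - 2 := by ring
  simp only [DD, KK, WW, e, hp, hq, derivative_add, derivative_mul, derivative_C,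
    derivative_X, zero_mul, mul_one, zero_add, one_mul]
  ring

lemma Wstep (P Q : ℤ → Polynomial ℚ) (n : ℤ) (c : ℚ)
    (hp : P n = P (n - 1) + C c * X * P (n - 2))
    (hq : Q n = Q (n - 1) + C c * X * Q (n - 2)) :
    WW P Q n = -(C c * X) * WW P Q (n - 1) := by
  have e : n - 1 - 1 = n - 2 := by ring
  simp only [WW, e, hp, hq]
  ring

lemma expA_odd (k : ℤ) (hk : 1 ≤ k) :
    expA (2 * k + 1) = C ((1 : ℚ) / (2 * (2 * (k : ℚ) + 1))) * X := by
  have h1 : (2 * k + 1 : ℤ) ≠ 1 := by omega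
  have h2 : ¬ Even (2 * k + 1 : ℤ) := by
    rintro ⟨m, hm⟩; omega
  rw [expA, if_neg h1, if_neg h2]
  push_cast
  ring_nf

lemma expA_even (k : ℤ) (hk : 1 ≤ k) :
    expA (2 * k + 2) = C (-((1 : ℚ) / (2 * (2 * (k : ℚ) + 1)))) * X := by
  have h1 : (2 * k + 2 : ℤ) ≠ 1 := by omega
  have h2 : Even (2 * k + 2 : ℤ) := ⟨k + 1, by ring⟩
  rw [expA, if_neg h1, if_pos h2]
  congr 1
  push_cast
  rw [neg_div]
  congr 2
  ring

lemma push (P Q : ℤ → Polynomial ℚ)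
    (hPrec : ∀ n : ℤ, 1 ≤ n → P n = P (n - 1) + expA n * P (n - 2))
    (hQrec : ∀ n : ℤ, 1 ≤ n → Q n = Q (n - 1) + expA n * Q (n - 2))
    (k : ℤ) (hk : 1 ≤ k)
    (h1 : WW P Q (2 * k) = 2 * DD P Q (2 * k))
    (h2 : KK P Q (2 * k) = DD P Q (2 * k - 1) + WW P Q (2 * k))
    (h3 : DD P Q (2 * k) + C ((1 : ℚ) / (2 * (2 * (k : ℚ) + 1))) * X * DD P Q (2 * k - 1)
        = C ((1 : ℚ) / (2 * (2 * (k : ℚ) + 1))) * WW P Q (2 * k)) :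
    (WW P Q (2 * k + 2) = 2 * DD P Q (2 * k + 2)) ∧
    (KK P Q (2 * k + 2) = DD P Q (2 * k + 1) + WW P Q (2 * k + 2)) ∧
    (DD P Q (2 * k + 2) + C ((1 : ℚ) / (2 * (2 * (k : ℚ) + 3))) * X * DD P Q (2 * k + 1)
        = C ((1 : ℚ) / (2 * (2 * (k : ℚ) + 3))) * WW P Q (2 * k + 2)) ∧
    (DD P Q (2 * k + 2)
        = -((C ((1 : ℚ) / (2 * (2 * (k : ℚ) + 1))) * X) ^ 2) * DD P Q (2 * k)) := by
  set γ : ℚ := (1 : ℚ) / (2 * (2 * (k : ℚ) + 1)) with hγ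
  set γ' : ℚ := (1 : ℚ) / (2 * (2 * (k : ℚ) + 3)) with hγ'
  have hkq : (1 : ℚ) ≤ (k : ℚ) := by exact_mod_cast hk
  have hne1 : (2 * (2 * (k : ℚ) + 1)) ≠ 0 := by nlinarith
  have hne2 : (2 * (2 * (k : ℚ) + 3)) ≠ 0 := by nlinarith
  have hrat : γ - γ' = 4 * (γ * γ') := by
    rw [hγ, hγ']; field_simp; ring
  have hgh : (C γ : Polynomial ℚ) - C γ' = 4 * (C γ * C γ') := by
    have := congrArg (C : ℚ → Polynomial ℚ) hrat
    simpa [map_sub, map_mul, map_ofNat] using this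
  have e1 : (2 * k + 1 : ℤ) - 1 = 2 * k := by ring
  have e2 : (2 * k + 1 : ℤ) - 2 = 2 * k - 1 := by ring
  have e3 : (2 * k + 2 : ℤ) - 1 = 2 * k + 1 := by ring
  have e4 : (2 * k + 2 : ℤ) - 2 = 2 * k := by ring
  have hp1 : P (2 * k + 1) = P (2 * k + 1 - 1) + C γ * X * P (2 * k + 1 - 2) := by
    rw [hPrec _ (by omega), expA_odd k hk]
  have hq1 : Q (2 * k + 1) = Q (2 * k + 1 - 1) + C γ * X * Q (2 * k + 1 - 2) := by
    rw [hQrec _ (by omega), expA_odd k hk]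
  have hp2 : P (2 * k + 2) = P (2 * k + 2 - 1) + C (-γ) * X * P (2 * k + 2 - 2) := by
    rw [hPrec _ (by omega), expA_even k hk]
  have hq2 : Q (2 * k + 2) = Q (2 * k + 2 - 1) + C (-γ) * X * Q (2 * k + 2 - 2) := by
    rw [hQrec _ (by omega), expA_even k hk]
  have hDmid := Dstep P Q (2 * k + 1) γ hp1 hq1
  have hKmid := Kstep P Q (2 * k + 1) γ hp1 hq1
  have hWmid := Wstep P Q (2 * k + 1) γ hp1 hq1
  have hDnew := Dstep P Q (2 * k + 2) (-γ) hp2 hq2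
  have hKnew := Kstep P Q (2 * k + 2) (-γ) hp2 hq2
  have hWnew := Wstep P Q (2 * k + 2) (-γ) hp2 hq2
  simp only [e1, e2] at hDmid hKmid hWmid
  simp only [e3, e4, map_neg] at hDnew hKnew hWnew
  have hG4 : DD P Q (2 * k + 2) = -((C γ * X) ^ 2) * DD P Q (2 * k) := by
    linear_combination hDnew + hDmid - (C γ * X) * hKmid + (C γ) * hWmid
      + (C γ * X - (C γ * X) ^ 2) * h2 + h3 + (C γ * X - (C γ * X) ^ 2) * h1
  refine ⟨?_, ?_, ?_, hG4⟩
  · linear_combination hWnew + (C γ * X) * hWmid - 2 * hG4 - (C γ * X) ^ 2 * h1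
  · linear_combination hKnew - hDnew + hG4 - hWnew - (C γ * X) * hWmid + (C γ * X) ^ 2 * h1
  · linear_combination hG4 + (C γ') * X * hDmid + (C γ') * (C γ) * X ^ 2 * h2
      + (C γ') * X * ((C γ) * X + 1) * h3 - (C γ') * hWnew - (C γ') * (C γ) * X * hWmid
      + (C γ') * (C γ) * X ^ 2 * (2 * (C γ) + 1) * h1 - (C γ) * X ^ 2 * (DD P Q (2 * k)) * hgh

lemma aux (P Q : ℤ → Polynomial ℚ)
    (hPinit : P (-1) = 1 ∧ P 0 = 0) (hQinit : Q (-1) = 0 ∧ Q 0 = 1)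
    (hPrec : ∀ n : ℤ, 1 ≤ n → P n = P (n - 1) + expA n * P (n - 2))
    (hQrec : ∀ n : ℤ, 1 ≤ n → Q n = Q (n - 1) + expA n * Q (n - 2)) :
    ∀ k : ℤ, 1 ≤ k →
      (WW P Q (2 * k) = 2 * DD P Q (2 * k)) ∧
      (KK P Q (2 * k) = DD P Q (2 * k - 1) + WW P Q (2 * k)) ∧
      (DD P Q (2 * k) + C ((1 : ℚ) / (2 * (2 * (k : ℚ) + 1))) * X * DD P Q (2 * k - 1)
          = C ((1 : ℚ) / (2 * (2 * (k : ℚ) + 1))) * WW P Q (2 * k)) := by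
  refine Int.le_induction ?_ ?_
  · -- base case k = 1
    have hp1 : P 1 = X := by
      rw [hPrec 1 le_rfl]
      norm_num [hPinit.1, hPinit.2, expA]
    have hq1 : Q 1 = 1 := by
      rw [hQrec 1 le_rfl]
      norm_num [hQinit.1, hQinit.2, expA]
    have hA2 : expA 2 = C (-(1 : ℚ)/2) * X := by
      rw [expA]
      norm_num
    have hp2 : P 2 = X := by
      rw [hPrec 2 (by norm_num), hA2]
      norm_num [hPinit.2, hp1]
    have hq2 : Q 2 = 1 + C (-(1 : ℚ)/2) * X := by
      rw [hQrec 2 (by norm_num), hA2]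
      norm_num [hQinit.2, hq1]
    have i1 : (2 : ℤ) * 1 = 2 := by norm_num
    have i2 : (2 : ℤ) * 1 - 1 = 1 := by norm_num
    have i3 : (2 : ℤ) - 1 = 1 := by norm_num
    have i4 : (1 : ℤ) - 1 = 0 := by norm_num
    refine ⟨?_, ?_, ?_⟩ <;>
    · simp only [DD, KK, WW, i1, i2, i3, i4, hp1, hq1, hp2, hq2, hPinit.2, hQinit.2]
      apply Polynomial.funext
      intro r
      simp
      ring
  · -- inductive step
    intro n hn ih
    obtain ⟨ih1, ih2, ih3⟩ := ih
    obtain ⟨g1, g2, g3, _⟩ := push P Q hPrec hQrec n hn ih1 ih2 ih3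
    have j1 : (2 : ℤ) * (n + 1) = 2 * n + 2 := by ring
    have j2 : (2 : ℤ) * (n + 1) - 1 = 2 * n + 1 := by ring
    have j3 : ((n + 1 : ℤ) : ℚ) = (n : ℚ) + 1 := by push_cast; ring
    have j4 : (1 : ℚ) / (2 * (2 * ((n : ℚ) + 1) + 1)) = 1 / (2 * (2 * (n : ℚ) + 3)) := by
      ring_nf
    rw [j2, j1, j3, j4]
    exact ⟨g1, g2, g3⟩

/-- **First-order recurrence for the even-indexed remainders of the continued
fraction of `exp`.**  With `H_{2k} := P_{2k}'·Q_{2k} − P_{2k}·Q_{2k}' − P_{2k}·Q_{2k}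
− Q_{2k}²`, one has `H_{2k+2} = −(z²/(4(2k+1)²))·H_{2k}` for all `k ≥ 0`. -/
theorem exp_remainder_recurrence
    (P Q : ℤ → Polynomial ℚ)
    (hPinit : P (-1) = 1 ∧ P 0 = 0) (hQinit : Q (-1) = 0 ∧ Q 0 = 1)
    (hPrec : ∀ n : ℤ, 1 ≤ n → P n = P (n - 1) + expA n * P (n - 2))
    (hQrec : ∀ n : ℤ, 1 ≤ n → Q n = Q (n - 1) + expA n * Q (n - 2))
    (H : ℤ → Polynomial ℚ)
    (hH : ∀ k : ℤ, H (2 * k) =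
      derivative (P (2 * k)) * Q (2 * k) - P (2 * k) * derivative (Q (2 * k))
        - P (2 * k) * Q (2 * k) - Q (2 * k) ^ 2) :
    ∀ k : ℤ, 0 ≤ k →
      H (2 * k + 2) = -(C ((1 : ℚ) / (4 * (2 * (k : ℚ) + 1) ^ 2)) * X ^ 2) * H (2 * k) := by
  intro k hk
  have eH : ∀ m : ℤ, H (2 * m) = DD P Q (2 * m) := by
    intro m; rw [hH m, DD]
  rcases eq_or_lt_of_le hk with h0 | h1
  · -- k = 0
    subst h0
    have hp1 : P 1 = X := by
      rw [hPrec 1 le_rfl]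
      norm_num [hPinit.1, hPinit.2, expA]
    have hq1 : Q 1 = 1 := by
      rw [hQrec 1 le_rfl]
      norm_num [hQinit.1, hQinit.2, expA]
    have hA2 : expA 2 = C (-(1 : ℚ)/2) * X := by
      rw [expA]
      norm_num
    have hp2 : P 2 = X := by
      rw [hPrec 2 (by norm_num), hA2]
      norm_num [hPinit.2, hp1]
    have hq2 : Q 2 = 1 + C (-(1 : ℚ)/2) * X := by
      rw [hQrec 2 (by norm_num), hA2]
      norm_num [hQinit.2, hq1]
    have h2 := hH 1
    have h0' := hH 0
    norm_num at h2 h0' ⊢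
    rw [h2, h0', hp2, hq2, hPinit.2, hQinit.2]
    apply Polynomial.funext
    intro r
    simp
    ring
  · have hk1 : 1 ≤ k := h1
    obtain ⟨a1, a2, a3⟩ := aux P Q hPinit hQinit hPrec hQrec k hk1
    obtain ⟨_, _, _, g4⟩ := push P Q hPrec hQrec k hk1 a1 a2 a3
    have e2 : H (2 * k + 2) = DD P Q (2 * k + 2) := by
      have := eH (k + 1)
      rw [show (2 : ℤ) * (k + 1) = 2 * k + 2 by ring] at this
      exact this
    rw [e2, eH k, g4]
    have ec : (1 : ℚ) / (4 * (2 * (k : ℚ) + 1) ^ 2)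
        = (1 / (2 * (2 * (k : ℚ) + 1))) * (1 / (2 * (2 * (k : ℚ) + 1))) := by
      rw [div_mul_div_comm, one_mul]
      congr 1
      ring
    rw [ec, C_mul]
    ring
end

section
/- Let K = ℚ(q) be the field of rational functions in q over ℚ. Define polynomials a_n ∈ K[z] by a_1 = z, a_{2k} = −q^{k−1}(1−q)·z/((1+q^k)(1−q^{2k−1})) for k ≥ 1, and a_{2k+1} = q^{2k}(1−q)·z/((1+q^k)(1−q^{2k+1})) for k ≥ 1, and define (P_n) and (Q_n) by P_{−1} = 1, P_0 = 0, Q_{−1} = 0, Q_0 = 1 and, for n ≥ 1, P_n = P_{n−1} + a_n·P_{n−2}, Q_n = Q_{n−1} + a_n·Q_{n−2}. Then for all k ≥ 1: P_{2k+2} = (1 − (1−q)q^k·z/((1+q^k)(1+q^{k+1})))·P_{2k} + (q^{3k−1}(1−q)²·z²/((1+q^k)²(1−q^{2k+1})(1−q^{2k−1})))·P_{2k−2}, and the same recurrence holds for Q. -/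
/-- The indeterminate `q`, as an element of the field `ℚ(q)` of rational functions. -/
noncomputable def qq : RatFunc ℚ := RatFunc.X

lemma qq_ne : qq ≠ 0 := RatFunc.X_ne_zero
lemma one_add_qq_pow_ne (n : ℕ) : (1 + qq ^ n : RatFunc ℚ) ≠ 0 := by
  have h : (1 + qq ^ n : RatFunc ℚ)
      = algebraMap (Polynomial ℚ) (RatFunc ℚ) (1 + Polynomial.X ^ n) := by
    simp [qq, RatFunc.algebraMap_X]
  rw [h, ne_eq, map_eq_zero_iff _ (RatFunc.algebraMap_injective ℚ)]
  intro hc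
  have := congrArg (Polynomial.eval 1) hc
  simp at this
lemma one_sub_qq_pow_ne (n : ℕ) (hn : n ≠ 0) : (1 - qq ^ n : RatFunc ℚ) ≠ 0 := by
  have h : (1 - qq ^ n : RatFunc ℚ)
      = algebraMap (Polynomial ℚ) (RatFunc ℚ) (1 - Polynomial.X ^ n) := by
    simp [qq, RatFunc.algebraMap_X]
  rw [h, ne_eq, map_eq_zero_iff _ (RatFunc.algebraMap_injective ℚ)]
  intro hc
  have := congrArg (Polynomial.eval 0) hc
  simp [zero_pow hn] at this
lemma one_add_qq_zpow_ne (n : ℤ) (hn : 0 ≤ n) : (1 + qq ^ n : RatFunc ℚ) ≠ 0 := by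
  obtain ⟨m, rfl⟩ := Int.eq_ofNat_of_zero_le hn
  rw [zpow_natCast]; exact one_add_qq_pow_ne m
lemma one_sub_qq_zpow_ne (n : ℤ) (hn : 1 ≤ n) : (1 - qq ^ n : RatFunc ℚ) ≠ 0 := by
  obtain ⟨m, rfl⟩ := Int.eq_ofNat_of_zero_le (by omega : (0:ℤ) ≤ n)
  rw [zpow_natCast]; exact one_sub_qq_pow_ne m (by omega)

lemma hc_abs {F : Type*} [Field F] (q t : F) (h1 : 1 + t ≠ 0)
    (h2 : 1 + t * q ≠ 0) (h3 : 1 - t ^ 2 * q ≠ 0) :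
    t ^ 2 * (1 - q) / ((1 + t) * (1 - t ^ 2 * q))
      + -(t * (1 - q)) / ((1 + t * q) * (1 - t ^ 2 * q))
    = -((1 - q) * t / ((1 + t) * (1 + t * q))) := by
  field_simp
  ring
lemma hd_abs {F : Type*} [Field F] (q t : F) (hq : q ≠ 0) (h1 : 1 + t ≠ 0)
    (h3 : 1 - t ^ 2 * q ≠ 0) (h4 : q - t ^ 2 ≠ 0) :
    (t ^ 2 * (1 - q) / ((1 + t) * (1 - t ^ 2 * q)))
      * (-(t / q * (1 - q)) / ((1 + t) * (1 - t ^ 2 / q)))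
    = -(t ^ 3 / q * (1 - q) ^ 2 /
        ((1 + t) ^ 2 * (1 - t ^ 2 * q) * (1 - t ^ 2 / q))) := by
  have h5 : 1 - t ^ 2 / q = (q - t ^ 2) / q := by field_simp
  rw [h5]
  field_simp


/-- The partial numerators of the continued fraction of the `q`-exponential:
`a₁ = z`, `a_{2k} = −q^{k−1}(1−q)z/((1+q^k)(1−q^{2k−1}))` and
`a_{2k+1} = q^{2k}(1−q)z/((1+q^k)(1−q^{2k+1}))` for `k ≥ 1`. -/
noncomputable def qexpA (n : ℤ) : Polynomial (RatFunc ℚ) :=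
  if n = 1 then Polynomial.X
  else if Even n then
    -- `n = 2k`, `k = n/2`
    Polynomial.C (-(qq ^ (n / 2 - 1) * (1 - qq)) / ((1 + qq ^ (n / 2)) * (1 - qq ^ (n - 1)))) *
      Polynomial.X
  else
    -- `n = 2k+1`, `k = (n−1)/2`
    Polynomial.C (qq ^ (n - 1) * (1 - qq) / ((1 + qq ^ ((n - 1) / 2)) * (1 - qq ^ n))) *
      Polynomial.X

lemma qexp_aux (P : ℤ → Polynomial (RatFunc ℚ))
    (hPrec : ∀ n : ℤ, 1 ≤ n → P n = P (n - 1) + qexpA n * P (n - 2))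
    (k : ℤ) (hk : 1 ≤ k) :
    P (2 * k + 2) =
      (1 - Polynomial.C ((1 - qq) * qq ^ k / ((1 + qq ^ k) * (1 + qq ^ (k + 1)))) *
          Polynomial.X) * P (2 * k) +
        Polynomial.C (qq ^ (3 * k - 1) * (1 - qq) ^ 2 /
            ((1 + qq ^ k) ^ 2 * (1 - qq ^ (2 * k + 1)) * (1 - qq ^ (2 * k - 1)))) *
          Polynomial.X ^ 2 * P (2 * k - 2) := by
  have hq : qq ≠ 0 := qq_ne
  -- zpow rewrites
  have e1 : qq ^ (2 * k) = (qq ^ k) ^ 2 := by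
    rw [show (2 * k : ℤ) = k + k by ring, zpow_add₀ hq, sq]
  have e2 : qq ^ (2 * k + 1) = (qq ^ k) ^ 2 * qq := by
    rw [zpow_add₀ hq, e1, zpow_one]
  have e3 : qq ^ (k + 1) = qq ^ k * qq := by
    rw [zpow_add₀ hq, zpow_one]
  have e4 : qq ^ (2 * k - 1) = (qq ^ k) ^ 2 / qq := by
    rw [zpow_sub₀ hq, e1, zpow_one]
  have e5 : qq ^ (3 * k - 1) = (qq ^ k) ^ 3 / qq := by
    rw [zpow_sub₀ hq, show (3 * k : ℤ) = k + k + k by ring, zpow_add₀ hq, zpow_add₀ hq,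
      zpow_one]
    ring
  have e6 : qq ^ (k - 1) = qq ^ k / qq := by
    rw [zpow_sub₀ hq, zpow_one]
  -- nonzero facts
  have n1 : 1 + qq ^ k ≠ 0 := one_add_qq_zpow_ne k (by omega)
  have n2 : 1 + qq ^ k * qq ≠ 0 := by rw [← e3]; exact one_add_qq_zpow_ne (k + 1) (by omega)
  have n3 : 1 - (qq ^ k) ^ 2 * qq ≠ 0 := by
    rw [← e2]; exact one_sub_qq_zpow_ne (2 * k + 1) (by omega)
  have n4' : (1 : RatFunc ℚ) - (qq ^ k) ^ 2 / qq ≠ 0 := by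
    rw [← e4]; exact one_sub_qq_zpow_ne (2 * k - 1) (by omega)
  have n4 : qq - (qq ^ k) ^ 2 ≠ 0 := by
    have h : qq - (qq ^ k) ^ 2 = qq * (1 - (qq ^ k) ^ 2 / qq) := by field_simp
    rw [h]; exact mul_ne_zero hq n4'
  -- unfolded qexpA values
  have hA1x : qexpA (2 * k + 1)
      = Polynomial.C (qq ^ (2 * k) * (1 - qq) / ((1 + qq ^ k) * (1 - qq ^ (2 * k + 1)))) *
        Polynomial.X := by
    have u1 : (2 * k + 1 : ℤ) ≠ 1 := by omega
    have u2 : ¬ Even (2 * k + 1 : ℤ) := by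
      rw [Int.even_iff]; omega
    simp only [qexpA, if_neg u1, if_neg u2]
    rw [show (2 * k + 1 - 1 : ℤ) = 2 * k by ring, show (2 * k / 2 : ℤ) = k by omega]
  have hA2x : qexpA (2 * k + 2)
      = Polynomial.C (-(qq ^ k * (1 - qq)) / ((1 + qq ^ (k + 1)) * (1 - qq ^ (2 * k + 1)))) *
        Polynomial.X := by
    have u1 : (2 * k + 2 : ℤ) ≠ 1 := by omega
    have u2 : Even (2 * k + 2 : ℤ) := ⟨k + 1, by ring⟩
    simp only [qexpA, if_neg u1, if_pos u2]
    rw [show ((2 * k + 2) / 2 : ℤ) = k + 1 by omega, show (k + 1 - 1 : ℤ) = k by ring,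
      show (2 * k + 2 - 1 : ℤ) = 2 * k + 1 by ring]
  have hA0x : qexpA (2 * k)
      = Polynomial.C (-(qq ^ (k - 1) * (1 - qq)) / ((1 + qq ^ k) * (1 - qq ^ (2 * k - 1)))) *
        Polynomial.X := by
    have u1 : (2 * k : ℤ) ≠ 1 := by omega
    have u2 : Even (2 * k : ℤ) := ⟨k, by ring⟩
    simp only [qexpA, if_neg u1, if_pos u2]
    rw [show (2 * k / 2 : ℤ) = k by omega]
  -- coefficient identities
  have hc : qq ^ (2 * k) * (1 - qq) / ((1 + qq ^ k) * (1 - qq ^ (2 * k + 1)))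
      + -(qq ^ k * (1 - qq)) / ((1 + qq ^ (k + 1)) * (1 - qq ^ (2 * k + 1)))
      = -((1 - qq) * qq ^ k / ((1 + qq ^ k) * (1 + qq ^ (k + 1)))) := by
    rw [e1, e2, e3]
    exact hc_abs qq (qq ^ k) n1 n2 n3
  have hd : (qq ^ (2 * k) * (1 - qq) / ((1 + qq ^ k) * (1 - qq ^ (2 * k + 1))))
      * (-(qq ^ (k - 1) * (1 - qq)) / ((1 + qq ^ k) * (1 - qq ^ (2 * k - 1))))
      = -(qq ^ (3 * k - 1) * (1 - qq) ^ 2 /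
          ((1 + qq ^ k) ^ 2 * (1 - qq ^ (2 * k + 1)) * (1 - qq ^ (2 * k - 1)))) := by
    rw [e1, e2, e4, e5, e6]
    exact hd_abs qq (qq ^ k) hq n1 n3 n4
  have hCc : Polynomial.C (qq ^ (2 * k) * (1 - qq) / ((1 + qq ^ k) * (1 - qq ^ (2 * k + 1))))
      + Polynomial.C (-(qq ^ k * (1 - qq)) / ((1 + qq ^ (k + 1)) * (1 - qq ^ (2 * k + 1))))
      = -(Polynomial.C ((1 - qq) * qq ^ k / ((1 + qq ^ k) * (1 + qq ^ (k + 1))))) := by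
    rw [← map_add, ← map_neg]; exact congrArg Polynomial.C hc
  have hCd : Polynomial.C (qq ^ (2 * k) * (1 - qq) / ((1 + qq ^ k) * (1 - qq ^ (2 * k + 1))))
      * Polynomial.C (-(qq ^ (k - 1) * (1 - qq)) / ((1 + qq ^ k) * (1 - qq ^ (2 * k - 1))))
      = -(Polynomial.C (qq ^ (3 * k - 1) * (1 - qq) ^ 2 /
          ((1 + qq ^ k) ^ 2 * (1 - qq ^ (2 * k + 1)) * (1 - qq ^ (2 * k - 1))))) := by
    rw [← map_mul, ← map_neg]; exact congrArg Polynomial.C hd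
  -- recurrence instances
  have h2 := hPrec (2 * k + 2) (by omega)
  rw [show (2 * k + 2 - 1 : ℤ) = 2 * k + 1 by ring,
    show (2 * k + 2 - 2 : ℤ) = 2 * k by ring] at h2
  have h1 := hPrec (2 * k + 1) (by omega)
  rw [show (2 * k + 1 - 1 : ℤ) = 2 * k by ring,
    show (2 * k + 1 - 2 : ℤ) = 2 * k - 1 by ring] at h1
  have h0 := hPrec (2 * k) (by omega)
  rw [hA1x] at h1
  rw [hA2x] at h2
  rw [hA0x] at h0
  linear_combination h2 + h1
    - (Polynomial.C (qq ^ (2 * k) * (1 - qq) / ((1 + qq ^ k) * (1 - qq ^ (2 * k + 1)))) *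
        Polynomial.X) * h0
    + (Polynomial.X * P (2 * k)) * hCc
    - (Polynomial.X ^ 2 * P (2 * k - 2)) * hCd

/-- **Recurrence for the even-indexed convergents of the continued fraction of the
`q`-exponential.**  For all `k ≥ 1`,
`P_{2k+2} = (1 − (1−q)q^k z/((1+q^k)(1+q^{k+1})))·P_{2k}
  + (q^{3k−1}(1−q)² z²/((1+q^k)²(1−q^{2k+1})(1−q^{2k−1})))·P_{2k−2}`,
and likewise for `Q`. -/
theorem qexp_even_convergents_recurrence
    (P Q : ℤ → Polynomial (RatFunc ℚ))
    (hPinit : P (-1) = 1 ∧ P 0 = 0) (hQinit : Q (-1) = 0 ∧ Q 0 = 1)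
    (hPrec : ∀ n : ℤ, 1 ≤ n → P n = P (n - 1) + qexpA n * P (n - 2))
    (hQrec : ∀ n : ℤ, 1 ≤ n → Q n = Q (n - 1) + qexpA n * Q (n - 2)) :
    ∀ k : ℤ, 1 ≤ k →
      P (2 * k + 2) =
        (1 - Polynomial.C ((1 - qq) * qq ^ k / ((1 + qq ^ k) * (1 + qq ^ (k + 1)))) *
            Polynomial.X) * P (2 * k) +
          Polynomial.C (qq ^ (3 * k - 1) * (1 - qq) ^ 2 /
              ((1 + qq ^ k) ^ 2 * (1 - qq ^ (2 * k + 1)) * (1 - qq ^ (2 * k - 1)))) *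
            Polynomial.X ^ 2 * P (2 * k - 2) ∧
      Q (2 * k + 2) =
        (1 - Polynomial.C ((1 - qq) * qq ^ k / ((1 + qq ^ k) * (1 + qq ^ (k + 1)))) *
            Polynomial.X) * Q (2 * k) +
          Polynomial.C (qq ^ (3 * k - 1) * (1 - qq) ^ 2 /
              ((1 + qq ^ k) ^ 2 * (1 - qq ^ (2 * k + 1)) * (1 - qq ^ (2 * k - 1)))) *
            Polynomial.X ^ 2 * Q (2 * k - 2) := by
  intro k hk
  exact ⟨qexp_aux P hPrec k hk, qexp_aux Q hQrec k hk⟩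
end
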